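/- arXiv:2411.05993 — 5 statements merged into one kernel-verified Lean document; each statement's English description precedes it below -/
import Mathlib

section
/- Let N ≥ 1, let 0 < ᾱ < 1, and let ρ : ℝ^N → [0,∞) be a measurable probability density (∫_{ℝ^N} ρ(u) du = 1). Define p(x) := ∫_{ℝ^N} g_N(x; √ᾱ·u, 1−ᾱ) ρ(u) du and m(x) := (1/p(x)) ∫_{ℝ^N} u · g_N(x; √ᾱ·u, 1−ᾱ) ρ(u) du. Then for every x ∈ ℝ^N one has p(x) > 0, the function log p is differentiable at x, and its gradient satisfies ∇ log p(x) = (√ᾱ·m(x) − x) / (1 − ᾱ). -/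
open MeasureTheory Real

private lemma aux_r_exp {s : ℝ} (hs : 0 < s) (r : ℝ) (hr : 0 ≤ r) :
    r * Real.exp (-r ^ 2 / (2 * s)) ≤ Real.sqrt s := by
  have h1 : (0:ℝ) < Real.sqrt s := Real.sqrt_pos.2 hs
  have h2 : Real.sqrt s ^ 2 = s := Real.sq_sqrt hs.le
  have h3 : 1 + r ^ 2 / (2 * s) ≤ Real.exp (r ^ 2 / (2 * s)) := by
    have := Real.add_one_le_exp (r ^ 2 / (2 * s)); linarith
  have hrw : -r ^ 2 / (2 * s) = -(r ^ 2 / (2 * s)) := by ring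
  rw [hrw, Real.exp_neg, mul_inv_le_iff₀ (Real.exp_pos _)]
  have h4 : Real.sqrt s * (1 + r ^ 2 / (2 * s)) ≤ Real.sqrt s * Real.exp (r ^ 2 / (2 * s)) :=
    by nlinarith
  have key : Real.sqrt s * r ^ 2 + s * Real.sqrt s ≥ 2 * r * s := by
    nlinarith [mul_nonneg (sq_nonneg (r - Real.sqrt s)) h1.le]
  have h5 : r ≤ Real.sqrt s * (1 + r ^ 2 / (2 * s)) := by
    rw [mul_add, mul_one, mul_div_assoc', ← sub_le_iff_le_add', le_div_iff₀ (by positivity)]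
    nlinarith [mul_pos hs h1]
  linarith

private lemma gaussian_hasFDerivAt {N : ℕ} {ᾱ : ℝ} (hα1 : ᾱ < 1) (C ru : ℝ)
    (u z : EuclideanSpace ℝ (Fin N)) :
    HasFDerivAt (fun w : EuclideanSpace ℝ (Fin N) =>
        C * Real.exp (-‖w - Real.sqrt ᾱ • u‖ ^ 2 / (2 * (1 - ᾱ))) * ru)
      (InnerProductSpace.toDual ℝ _
        (((C * Real.exp (-‖z - Real.sqrt ᾱ • u‖ ^ 2 / (2 * (1 - ᾱ)))) * ru) •
        ((1 - ᾱ)⁻¹ • (Real.sqrt ᾱ • u - z)))) z := by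
  have hs : (0:ℝ) < 1 - ᾱ := by linarith
  set b : EuclideanSpace ℝ (Fin N) := Real.sqrt ᾱ • u with hb
  have hsub : HasFDerivAt (fun w : EuclideanSpace ℝ (Fin N) => w - b)
      (ContinuousLinearMap.id ℝ _) z := (hasFDerivAt_id z).sub_const b
  have h1 := (hsub.inner ℝ hsub)
  have h2 := h1.const_mul (-(2 * (1 - ᾱ))⁻¹)
  have h3 := h2.exp
  have h4 := h3.const_mul C
  have h5 := h4.mul_const ru
  have hfun : (fun w : EuclideanSpace ℝ (Fin N) =>
      C * Real.exp (-(2 * (1 - ᾱ))⁻¹ * (inner ℝ (w - b) (w - b) : ℝ)) * ru)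
      = (fun w : EuclideanSpace ℝ (Fin N) =>
      C * Real.exp (-‖w - b‖ ^ 2 / (2 * (1 - ᾱ))) * ru) := by
    funext w
    rw [real_inner_self_eq_norm_sq]
    ring_nf
  rw [hfun] at h5
  convert h5 using 1
  rotate_left 3
  ext y
  simp only [ContinuousLinearMap.smul_apply, ContinuousLinearMap.comp_apply,
    ContinuousLinearMap.prod_apply, ContinuousLinearMap.id_apply, fderivInnerCLM_apply,
    InnerProductSpace.toDual_apply_apply, smul_eq_mul, real_inner_self_eq_norm_sq]
  have hcomm : (inner ℝ y (z - b) : ℝ) = inner ℝ z y - inner ℝ b y := by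
    rw [real_inner_comm, inner_sub_left]
  rw [real_inner_smul_left, real_inner_smul_left]
  simp only [inner_sub_left, hcomm]
  rw [show -(2 * (1 - ᾱ))⁻¹ * ‖z - b‖ ^ 2 = -‖z - b‖ ^ 2 / (2 * (1 - ᾱ)) by ring,
    show (1 - ᾱ)⁻¹ = 2 * (2 * (1 - ᾱ))⁻¹ by rw [mul_inv]; field_simp]
  ring
  all_goals rfl

set_option maxHeartbeats 1000000 in
/-- **Lemma 1 (conditional score function).**
For `N ≥ 1`, `0 < ᾱ < 1` and a measurable probability density `ρ` on `ℝ^N`,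
let `g x u` be the Gaussian density `g_N(x; √ᾱ·u, 1−ᾱ)`,
`p x = ∫ g_N(x; √ᾱ u, 1−ᾱ) ρ(u) du` and
`m x = (1/p x) ∫ u g_N(x; √ᾱ u, 1−ᾱ) ρ(u) du`.
Then `p x > 0`, `log p` is differentiable at every `x`, and
`∇ log p(x) = (√ᾱ · m(x) − x)/(1 − ᾱ)`. -/
theorem conditional_score_function
    (N : ℕ) (hN : 1 ≤ N) (ᾱ : ℝ) (hα0 : 0 < ᾱ) (hα1 : ᾱ < 1)
    (ρ : EuclideanSpace ℝ (Fin N) → ℝ) (hρmeas : Measurable ρ)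
    (hρnn : ∀ u, 0 ≤ ρ u) (hρint : ∫ u, ρ u = 1)
    (g : EuclideanSpace ℝ (Fin N) → EuclideanSpace ℝ (Fin N) → ℝ)
    (hg : ∀ x u, g x u =
      (2 * π * (1 - ᾱ)) ^ (-(N : ℝ) / 2) *
        Real.exp (-‖x - Real.sqrt ᾱ • u‖ ^ 2 / (2 * (1 - ᾱ))))
    (p : EuclideanSpace ℝ (Fin N) → ℝ)
    (hp : ∀ x, p x = ∫ u, g x u * ρ u)
    (m : EuclideanSpace ℝ (Fin N) → EuclideanSpace ℝ (Fin N))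
    (hm : ∀ x, m x = (p x)⁻¹ • ∫ u, (g x u * ρ u) • u) :
    ∀ x : EuclideanSpace ℝ (Fin N),
      0 < p x ∧
      DifferentiableAt ℝ (fun z => Real.log (p z)) x ∧
      gradient (fun z => Real.log (p z)) x
        = (1 - ᾱ)⁻¹ • (Real.sqrt ᾱ • m x - x) := by
  intro x
  have hs : (0:ℝ) < 1 - ᾱ := by linarith
  set C : ℝ := (2 * π * (1 - ᾱ)) ^ (-(N:ℝ)/2) with hC
  have hCpos : 0 < C := Real.rpow_pos_of_pos (by positivity) _
  have hgpos : ∀ z u, 0 < g z u := by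
    intro z u; rw [hg]; positivity
  have hgleC : ∀ z u, g z u ≤ C := by
    intro z u; rw [hg]
    have h1 : Real.exp (-‖z - Real.sqrt ᾱ • u‖ ^ 2 / (2 * (1 - ᾱ))) ≤ 1 := by
      rw [Real.exp_le_one_iff]
      exact div_nonpos_of_nonpos_of_nonneg (neg_nonpos.mpr (by positivity)) (by linarith)
    calc C * Real.exp (-‖z - Real.sqrt ᾱ • u‖ ^ 2 / (2 * (1 - ᾱ))) ≤ C * 1 :=
          mul_le_mul_of_nonneg_left h1 hCpos.le
      _ = C := mul_one C
  have hgcont : ∀ z, Continuous (fun u => g z u) := by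
    intro z
    have : (fun u => g z u) = fun u : EuclideanSpace ℝ (Fin N) =>
        C * Real.exp (-‖z - Real.sqrt ᾱ • u‖ ^ 2 / (2 * (1 - ᾱ))) := funext (hg z)
    rw [this]; fun_prop
  have hkey : ∀ (z u : EuclideanSpace ℝ (Fin N)),
      g z u * ‖z - Real.sqrt ᾱ • u‖ ≤ C * Real.sqrt (1 - ᾱ) := by
    intro z u
    rw [hg]
    have := aux_r_exp hs (‖z - Real.sqrt ᾱ • u‖) (norm_nonneg _)
    nlinarith [Real.exp_pos (-‖z - Real.sqrt ᾱ • u‖ ^ 2 / (2 * (1 - ᾱ))),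
      norm_nonneg (z - Real.sqrt ᾱ • u)]
  have hρ_int : Integrable ρ := by
    by_contra h
    rw [integral_undef h] at hρint; norm_num at hρint
  have hInt : ∀ z, Integrable (fun u => g z u * ρ u) := by
    intro z
    refine Integrable.mono' (hρ_int.const_mul C)
      (((hgcont z).measurable.mul hρmeas).aestronglyMeasurable) ?_
    filter_upwards with u
    rw [Real.norm_eq_abs, abs_of_nonneg (mul_nonneg (hgpos z u).le (hρnn u))]
    exact mul_le_mul_of_nonneg_right (hgleC z u) (hρnn u)
  have hsupp0 : 0 < volume (Function.support ρ) :=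
    (integral_pos_iff_support_of_nonneg hρnn hρ_int).1 (by rw [hρint]; norm_num)
  have hp_pos : 0 < p x := by
    rw [hp]
    refine (integral_pos_iff_support_of_nonneg
      (fun u => mul_nonneg (hgpos x u).le (hρnn u)) (hInt x)).2 ?_
    have : Function.support (fun u => g x u * ρ u) = Function.support ρ := by
      ext u
      simp [Function.mem_support, mul_eq_zero, (hgpos x u).ne']
    rw [this]; exact hsupp0
  -- derivative of the integrand
  have hderiv : ∀ (u z : EuclideanSpace ℝ (Fin N)),
      HasFDerivAt (fun w => g w u * ρ u)
        (InnerProductSpace.toDual ℝ _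
          ((g z u * ρ u) • ((1 - ᾱ)⁻¹ • (Real.sqrt ᾱ • u - z)))) z := by
    intro u z
    have hfg : (fun w => g w u * ρ u) = fun w : EuclideanSpace ℝ (Fin N) =>
        C * Real.exp (-‖w - Real.sqrt ᾱ • u‖ ^ 2 / (2 * (1 - ᾱ))) * ρ u :=
      funext fun w => by rw [hg]
    rw [hfg, hg z u]
    exact gaussian_hasFDerivAt hα1 C (ρ u) u z
  -- measurability of the gradient integrand
  have hvmeas : ∀ z, AEStronglyMeasurable
      (fun u => (g z u * ρ u) • ((1 - ᾱ)⁻¹ • (Real.sqrt ᾱ • u - z))) volume := by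
    intro z
    have hcont : Continuous (fun u : EuclideanSpace ℝ (Fin N) =>
        (1 - ᾱ)⁻¹ • (Real.sqrt ᾱ • u - z)) := by fun_prop
    exact (((hgcont z).measurable.mul hρmeas).smul hcont.measurable).aestronglyMeasurable
  -- bound on the gradient integrand
  have hvbound : ∀ (z u : EuclideanSpace ℝ (Fin N)),
      ‖(g z u * ρ u) • ((1 - ᾱ)⁻¹ • (Real.sqrt ᾱ • u - z))‖
        ≤ ((1 - ᾱ)⁻¹ * (C * Real.sqrt (1 - ᾱ))) * ρ u := by
    intro z u
    rw [norm_smul, norm_smul, Real.norm_eq_abs, Real.norm_eq_abs,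
      abs_of_nonneg (mul_nonneg (hgpos z u).le (hρnn u)),
      abs_of_nonneg (inv_nonneg.2 hs.le), norm_sub_rev]
    have h1 := hkey z u
    have h2 := hρnn u
    have h3 : (0:ℝ) ≤ (1 - ᾱ)⁻¹ := inv_nonneg.2 hs.le
    nlinarith [mul_le_mul_of_nonneg_right h1 (mul_nonneg h3 h2)]
  have hvint : Integrable
      (fun u => (g x u * ρ u) • ((1 - ᾱ)⁻¹ • (Real.sqrt ᾱ • u - x))) :=
    Integrable.mono' (hρ_int.const_mul _) (hvmeas x)
      (Filter.Eventually.of_forall fun u => hvbound x u)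
  -- the parametric-integral differentiation
  have hmain : HasFDerivAt (fun z => ∫ u, g z u * ρ u)
      (∫ u, InnerProductSpace.toDual ℝ _
        ((g x u * ρ u) • ((1 - ᾱ)⁻¹ • (Real.sqrt ᾱ • u - x)))) x := by
    refine hasFDerivAt_integral_of_dominated_of_fderiv_le (s := Metric.ball x 1)
      (bound := fun u => ((1 - ᾱ)⁻¹ * (C * Real.sqrt (1 - ᾱ))) * ρ u) (Metric.ball_mem_nhds x one_pos)
      (Filter.Eventually.of_forall fun z =>
        ((hgcont z).measurable.mul hρmeas).aestronglyMeasurable)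
      (hInt x) ?_ ?_ (hρ_int.const_mul _)
      (Filter.Eventually.of_forall fun u z _ => hderiv u z)
    · exact ((InnerProductSpace.toDual ℝ _).continuous.comp_aestronglyMeasurable (hvmeas x))
    · filter_upwards with u z _
      rw [LinearIsometryEquiv.norm_map]
      exact hvbound z u
  -- rewrite as a gradient statement about p
  have hpe : (fun z => ∫ u, g z u * ρ u) = p := funext fun z => (hp z).symm
  rw [hpe] at hmain
  have hswap : (∫ u, InnerProductSpace.toDual ℝ _
        ((g x u * ρ u) • ((1 - ᾱ)⁻¹ • (Real.sqrt ᾱ • u - x))))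
      = InnerProductSpace.toDual ℝ _
        (∫ u, (g x u * ρ u) • ((1 - ᾱ)⁻¹ • (Real.sqrt ᾱ • u - x))) :=
    (InnerProductSpace.toDual ℝ _).toLinearIsometry.integral_comp_comm _
  rw [hswap] at hmain
  -- integrability of the first-moment integrand
  have hsqα : (0:ℝ) < Real.sqrt ᾱ := Real.sqrt_pos.2 hα0
  have hI_int : Integrable (fun u => (g x u * ρ u) • u) := by
    refine Integrable.mono'
      (hρ_int.const_mul ((Real.sqrt ᾱ)⁻¹ * (C * Real.sqrt (1 - ᾱ) + C * ‖x‖)))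
      ((((hgcont x).measurable.mul hρmeas).smul measurable_id).aestronglyMeasurable) ?_
    filter_upwards with u
    rw [norm_smul, Real.norm_eq_abs, abs_of_nonneg (mul_nonneg (hgpos x u).le (hρnn u))]
    have h1 : Real.sqrt ᾱ * ‖u‖ = ‖Real.sqrt ᾱ • u‖ := by
      rw [norm_smul, Real.norm_eq_abs, abs_of_nonneg hsqα.le]
    have h2 : ‖Real.sqrt ᾱ • u‖ ≤ ‖x - Real.sqrt ᾱ • u‖ + ‖x‖ := by
      calc ‖Real.sqrt ᾱ • u‖ = ‖x - (x - Real.sqrt ᾱ • u)‖ := by rw [sub_sub_cancel]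
        _ ≤ ‖x‖ + ‖x - Real.sqrt ᾱ • u‖ := norm_sub_le _ _
        _ = ‖x - Real.sqrt ᾱ • u‖ + ‖x‖ := by ring
    have h3 := hkey x u
    have h4 := hgleC x u
    have h5 := (hgpos x u).le
    have h6 := hρnn u
    have h7 : g x u * (Real.sqrt ᾱ * ‖u‖) ≤ C * Real.sqrt (1 - ᾱ) + C * ‖x‖ := by
      rw [h1]
      nlinarith [norm_nonneg (x - Real.sqrt ᾱ • u), norm_nonneg x,
        mul_le_mul_of_nonneg_left h2 h5]
    have h8 : g x u * ‖u‖ ≤ (Real.sqrt ᾱ)⁻¹ * (C * Real.sqrt (1 - ᾱ) + C * ‖x‖) := by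
      have h9 := mul_le_mul_of_nonneg_left h7 (inv_nonneg.2 hsqα.le)
      calc g x u * ‖u‖ = (Real.sqrt ᾱ)⁻¹ * (g x u * (Real.sqrt ᾱ * ‖u‖)) := by
            field_simp
        _ ≤ (Real.sqrt ᾱ)⁻¹ * (C * Real.sqrt (1 - ᾱ) + C * ‖x‖) := h9
    nlinarith [mul_le_mul_of_nonneg_right h8 h6, norm_nonneg u]
  -- compute the integral G
  have hG : (∫ u, (g x u * ρ u) • ((1 - ᾱ)⁻¹ • (Real.sqrt ᾱ • u - x)))
      = (1 - ᾱ)⁻¹ • (Real.sqrt ᾱ • (∫ u, (g x u * ρ u) • u) - (p x) • x) := by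
    have h1 : ∀ u : EuclideanSpace ℝ (Fin N),
        (g x u * ρ u) • ((1 - ᾱ)⁻¹ • (Real.sqrt ᾱ • u - x))
        = (1 - ᾱ)⁻¹ • (Real.sqrt ᾱ • ((g x u * ρ u) • u) - (g x u * ρ u) • x) := by
      intro u
      rw [smul_comm]
      congr 1
      rw [smul_sub, smul_comm]
    have hA : Integrable (fun u => Real.sqrt ᾱ • ((g x u * ρ u) • u)) volume := by
      exact hI_int.smul (Real.sqrt ᾱ)
    have hB : Integrable (fun u => (g x u * ρ u) • x) volume := (hInt x).smul_const x
    simp_rw [h1]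
    rw [integral_smul, integral_sub hA hB, integral_smul, integral_smul_const, ← hp]
  rw [hG] at hmain
  -- compose with log
  have hlog := Real.hasDerivAt_log hp_pos.ne'
  have hcomp := hlog.comp_hasFDerivAt x hmain
  have hcomp' : HasFDerivAt (fun z => Real.log (p z))
      (InnerProductSpace.toDual ℝ _
        ((p x)⁻¹ • ((1 - ᾱ)⁻¹ • (Real.sqrt ᾱ • (∫ u, (g x u * ρ u) • u) - (p x) • x)))) x := by
    rw [_root_.map_smul]
    exact hcomp
  have hgrad : HasGradientAt (fun z => Real.log (p z))
      ((p x)⁻¹ • ((1 - ᾱ)⁻¹ • (Real.sqrt ᾱ • (∫ u, (g x u * ρ u) • u) - (p x) • x))) x :=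
    hasGradientAt_iff_hasFDerivAt.mpr hcomp'
  refine ⟨hp_pos, hcomp'.differentiableAt, ?_⟩
  rw [hgrad.gradient, hm, smul_comm]
  congr 1
  rw [smul_sub]
  congr 1
  · rw [smul_comm]
  · rw [smul_smul, inv_mul_cancel₀ hp_pos.ne', one_smul]
end

section
/- Fix a noise schedule as in the context and let N ≥ 1. Let t, k be integers with k ≥ 1, 1 ≤ t − k and t ≤ T. Fix x_0, x_t ∈ ℝ^N, let Z_{t}, Z_{t−1}, …, Z_{t−k+1} be independent standard Gaussian vectors in ℝ^N (each distributed as N(0, I_N)), and define the reverse chain X_t := x_t and X_{s−1} := γ_s x_0 + Γ_s^s X_s + σ_s Z_s for s = t, t−1, …, t−k+1. Then X_{t−k} is Gaussian with distribution N(μ_{t,k}, σ²_{t,k} I_N), where μ_{t,k} = (Σ_{i=0}^{k−1} Γ_{t−i−1}^{t−k+1} γ_{t−i}) x_0 + Γ_t^{t−k+1} x_t and σ²_{t,k} = Σ_{i=0}^{k−1} (Γ_{t−i−1}^{t−k+1})² σ²_{t−i}. -/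
open MeasureTheory ProbabilityTheory Finset

open MeasureTheory ProbabilityTheory Finset Real
open scoped ENNReal NNReal

noncomputable def rotL (a b : ℝ) : (ℝ×ℝ) →ₗ[ℝ] (ℝ×ℝ) :=
  LinearMap.prod (a • LinearMap.fst ℝ ℝ ℝ + b • LinearMap.snd ℝ ℝ ℝ)
    ((-b) • LinearMap.fst ℝ ℝ ℝ + a • LinearMap.snd ℝ ℝ ℝ)

lemma rotL_apply (a b : ℝ) (p : ℝ×ℝ) : rotL a b p = (a*p.1+b*p.2, -b*p.1+a*p.2) := by
  simp [rotL, mul_comm]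

lemma rotL_det (a b : ℝ) : LinearMap.det (rotL a b) = a^2+b^2 := by
  rw [← LinearMap.det_toMatrix (Module.Basis.finTwoProd ℝ)]
  have : (LinearMap.toMatrix (Module.Basis.finTwoProd ℝ) (Module.Basis.finTwoProd ℝ)) (rotL a b)
      = !![a, b; -b, a] := by
    ext i j
    rw [LinearMap.toMatrix_apply]
    fin_cases i <;> fin_cases j <;> simp [rotL_apply, Module.Basis.finTwoProd]
  rw [this, Matrix.det_fin_two_of]; ring

lemma map_rotL_volume (a b : ℝ) (h : a^2+b^2 = 1) :
    Measure.map (rotL a b) (volume : Measure (ℝ×ℝ)) = volume := by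
  rw [Measure.map_linearMap_addHaar_eq_smul_addHaar _ (by rw [rotL_det, h]; norm_num)]
  rw [rotL_det, h]
  norm_num

-- product of withDensity measures
lemma prod_withDensity (μ ν : Measure ℝ) [SigmaFinite μ] [SigmaFinite ν]
    {f g : ℝ → ℝ≥0∞} (hf : Measurable f) (hg : Measurable g)
    [SigmaFinite (μ.withDensity f)] [SigmaFinite (ν.withDensity g)] :
    (μ.withDensity f).prod (ν.withDensity g)
      = (μ.prod ν).withDensity (fun p => f p.1 * g p.2) := by
  refine Measure.prod_eq (μ := μ.withDensity f) (ν := ν.withDensity g) fun s t hs ht => ?_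
  rw [withDensity_apply (fun p => f p.1 * g p.2) (hs.prod ht), ← Measure.prod_restrict]
  rw [MeasureTheory.lintegral_prod_mul hf.aemeasurable hg.aemeasurable,
    withDensity_apply f hs, withDensity_apply g ht]

-- invariance of a withDensity measure under a map preserving the base and the density
lemma map_withDensity_inv {L : ℝ×ℝ → ℝ×ℝ} (hL : Measurable L)
    (hvol : Measure.map L (volume : Measure (ℝ×ℝ)) = volume)
    {F : ℝ×ℝ → ℝ≥0∞} (hF : Measurable F) (hFL : ∀ p, F (L p) = F p) :
    Measure.map L (volume.withDensity F) = volume.withDensity F := by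
  ext s hs
  rw [Measure.map_apply hL hs, withDensity_apply _ (hL hs), withDensity_apply _ hs]
  have h1 : ∫⁻ a in s, F a ∂(volume : Measure (ℝ×ℝ))
      = ∫⁻ a in s, F a ∂(Measure.map L volume) := by rw [hvol]
  rw [h1, setLIntegral_map hs hF hL]
  exact setLIntegral_congr_fun (hL hs) (fun p _ => (hFL p).symm)

local notation "g01" => gaussianReal 0 1

lemma g01_eq : (gaussianReal 0 1 : Measure ℝ) = volume.withDensity (gaussianPDF 0 1) :=
  gaussianReal_of_var_ne_zero 0 one_ne_zero

lemma gaussianPDF_rot (a b x y : ℝ) (h : a^2+b^2 = 1) :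
    gaussianPDF 0 1 (a*x+b*y) * gaussianPDF 0 1 (-b*x+a*y)
      = gaussianPDF 0 1 x * gaussianPDF 0 1 y := by
  have hpos : (0:ℝ) < (√(2 * Real.pi * (1:ℝ≥0)))⁻¹ := by
    rw [inv_pos]
    apply Real.sqrt_pos.2
    positivity
  simp only [gaussianPDF_def, gaussianPDFReal_def]
  rw [← ENNReal.ofReal_mul (by positivity), ← ENNReal.ofReal_mul (by positivity)]
  congr 1
  have e1 : ∀ u : ℝ, (√(2 * Real.pi * ((1:ℝ≥0):ℝ)))⁻¹ * Real.exp (-(u - 0) ^ 2 / (2 * ((1:ℝ≥0):ℝ)))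
      = (√(2 * Real.pi))⁻¹ * Real.exp (-(u^2) / 2) := by intro u; norm_num
  rw [e1, e1, e1, e1]
  have : Real.exp (-((a*x+b*y)^2) / 2) * Real.exp (-((-b*x+a*y)^2) / 2)
      = Real.exp (-(x^2)/2) * Real.exp (-(y^2)/2) := by
    rw [← Real.exp_add, ← Real.exp_add]
    congr 1
    nlinarith [sq_nonneg x, sq_nonneg y]
  ring_nf
  ring_nf at this
  nlinarith [this, Real.sq_sqrt (by positivity : (0:ℝ) ≤ 2*Real.pi), Real.sqrt_nonneg (2*Real.pi), Real.exp_pos (-(x^2)/2)]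

lemma map_rot_gauss (a b : ℝ) (h : a^2+b^2 = 1) :
    Measure.map (rotL a b) ((gaussianReal 0 1).prod (gaussianReal 0 1)) =
      (gaussianReal 0 1).prod (gaussianReal 0 1) := by
  have hpm : IsProbabilityMeasure ((volume : Measure ℝ).withDensity (gaussianPDF 0 1)) := by
    rw [← g01_eq]; infer_instance
  rw [g01_eq, prod_withDensity _ _ (measurable_gaussianPDF 0 1) (measurable_gaussianPDF 0 1),
    ← MeasureTheory.Measure.volume_eq_prod]
  refine map_withDensity_inv (rotL a b).continuous_of_finiteDimensional.measurable
    (map_rotL_volume a b h) ((measurable_gaussianPDF 0 1).comp measurable_fst |>.mul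
      ((measurable_gaussianPDF 0 1).comp measurable_snd)) ?_
  intro p
  simp only [rotL_apply]
  exact gaussianPDF_rot a b p.1 p.2 h

lemma gauss_lin (a b : ℝ) :
    Measure.map (fun p : ℝ×ℝ => a*p.1+b*p.2) ((gaussianReal 0 1).prod (gaussianReal 0 1))
      = gaussianReal 0 (Real.toNNReal (a^2+b^2)) := by
  rcases eq_or_lt_of_le (by positivity : (0:ℝ) ≤ a^2+b^2) with h0 | hpos
  · have ha : a = 0 := by nlinarith [sq_nonneg a, sq_nonneg b]
    have hb : b = 0 := by nlinarith [sq_nonneg a, sq_nonneg b]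
    subst ha; subst hb
    simp only [zero_mul, add_zero]
    rw [Measure.map_const, ← h0]
    simp [gaussianReal_zero_var]
  · set s : ℝ := Real.sqrt (a^2+b^2) with hs
    have hs0 : 0 < s := Real.sqrt_pos.2 hpos
    have hs2 : s^2 = a^2+b^2 := Real.sq_sqrt hpos.le
    have hunit : (a/s)^2 + (b/s)^2 = 1 := by field_simp [hs2]; linarith
    have hfun : (fun p : ℝ×ℝ => a*p.1+b*p.2)
        = (fun x : ℝ => s*x) ∘ (fun p : ℝ×ℝ => (a/s)*p.1+(b/s)*p.2) := by
      funext p; simp only [Function.comp_apply]; field_simp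
    have hfun2 : (fun p : ℝ×ℝ => (a/s)*p.1+(b/s)*p.2)
        = Prod.fst ∘ (rotL (a/s) (b/s)) := by
      funext p; simp [rotL_apply]
    rw [hfun, ← Measure.map_map (by fun_prop) (by fun_prop), hfun2,
      ← Measure.map_map measurable_fst (rotL (a/s) (b/s)).continuous_of_finiteDimensional.measurable,
      map_rot_gauss _ _ hunit, Measure.map_fst_prod]
    simp only [measure_univ, one_smul]
    rw [gaussianReal_map_const_mul s, mul_zero]
    congr 1
    ext
    simp [hs2, Real.toNNReal, max_eq_left (by positivity : (0:ℝ) ≤ a^2+b^2)]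

lemma gauss_affine (m : ℝ) (v : ℝ≥0) :
    Measure.map (fun x : ℝ => m + Real.sqrt v * x) (gaussianReal 0 1) = gaussianReal m v := by
  have : (fun x : ℝ => m + Real.sqrt v * x) = (fun x : ℝ => m + x) ∘ (fun x : ℝ => Real.sqrt v * x) := rfl
  rw [this, ← Measure.map_map (by fun_prop) (by fun_prop), gaussianReal_map_const_mul,
    gaussianReal_map_const_add]
  congr 1
  · simp
  · ext
    simp [Real.sq_sqrt (v.coe_nonneg)]

lemma gauss_scalar_step (c a s m : ℝ) (v : ℝ≥0) :
    Measure.map (fun p : ℝ×ℝ => c + a*p.1 + s*p.2)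
        ((gaussianReal m v).prod (gaussianReal 0 1))
      = gaussianReal (c + a*m) (Real.toNNReal (a^2*v + s^2)) := by
  have hmid : (gaussianReal 0 1 : Measure ℝ) = Measure.map id (gaussianReal 0 1) :=
    (Measure.map_id).symm
  rw [← gauss_affine m v]
  nth_rewrite 2 [hmid]
  rw [Measure.map_prod_map _ _ (by fun_prop) measurable_id,
    Measure.map_map (by fun_prop) (by fun_prop)]
  have : ((fun p : ℝ×ℝ => c + a*p.1 + s*p.2) ∘ Prod.map (fun x : ℝ => m + Real.sqrt v * x) id)
      = (fun x : ℝ => (c + a*m) + x) ∘ (fun p : ℝ×ℝ => (a*Real.sqrt v)*p.1 + s*p.2) := by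
    funext p; simp only [Function.comp_apply, Prod.map_fst, Prod.map_snd, id_eq]; ring
  rw [this, ← Measure.map_map (by fun_prop) (by fun_prop), gauss_lin,
    gaussianReal_map_const_add, zero_add]
  congr 2
  rw [mul_pow, Real.sq_sqrt (v.coe_nonneg)]

lemma pi_dirac' {N : ℕ} (a : Fin N → ℝ) :
    Measure.pi (fun i => Measure.dirac (a i)) = Measure.dirac a := by
  refine Measure.pi_eq fun s hs => ?_
  rw [Measure.dirac_apply' _ (MeasurableSet.univ_pi hs)]
  by_cases h : ∀ i, a i ∈ s i
  · rw [Set.indicator_of_mem (by simpa [Set.mem_univ_pi] using h)]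
    simp only [Measure.dirac_apply' _ (hs _)]
    rw [Finset.prod_congr rfl fun i _ => Set.indicator_of_mem (h i) 1]
    simp
  · push_neg at h; obtain ⟨i, hi⟩ := h
    rw [Set.indicator_of_notMem (by simp only [Set.mem_univ_pi]; push_neg; exact ⟨i, hi⟩)]
    exact (Finset.prod_eq_zero (Finset.mem_univ i)
      (by simp only [Measure.dirac_apply' _ (hs i)]; simp [Set.indicator_of_notMem hi])).symm

lemma vector_step {N : ℕ} {Ω : Type*} [MeasurableSpace Ω] (P : Measure Ω) [IsProbabilityMeasure P]
    (U W : Ω → (Fin N → ℝ)) (hU : Measurable U) (hW : Measurable W) (hUW : IndepFun U W P)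
    (μm : Fin N → ℝ) (v : ℝ≥0)
    (hUlaw : Measure.map U P = Measure.pi fun i => gaussianReal (μm i) v)
    (hWlaw : Measure.map W P = Measure.pi fun _ => gaussianReal 0 1)
    (c : Fin N → ℝ) (a s : ℝ) :
    Measure.map (fun ω => c + a • U ω + s • W ω) P
      = Measure.pi fun i => gaussianReal (c i + a * μm i) (Real.toNNReal (a^2*(v:ℝ) + s^2)) := by
  have hpair : Measure.map (fun ω => (U ω, W ω)) P = (Measure.map U P).prod (Measure.map W P) :=
    (indepFun_iff_map_prod_eq_prod_map_map hU.aemeasurable hW.aemeasurable).mp hUW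
  have hcomp : (fun ω => c + a • U ω + s • W ω)
      = (fun q : (Fin N → ℝ) × (Fin N → ℝ) => c + a • q.1 + s • q.2) ∘ (fun ω => (U ω, W ω)) := rfl
  rw [hcomp, ← Measure.map_map (by fun_prop) (hU.prodMk hW), hpair, hUlaw, hWlaw]
  have hMP := measurePreserving_arrowProdEquivProdArrow ℝ ℝ (Fin N)
    (fun i => gaussianReal (μm i) v) (fun _ => gaussianReal 0 1)
  rw [← hMP.map_eq, Measure.map_map (by fun_prop) (MeasurableEquiv.measurable _)]
  have hcomp2 : ((fun q : (Fin N → ℝ) × (Fin N → ℝ) => c + a • q.1 + s • q.2)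
        ∘ (MeasurableEquiv.arrowProdEquivProdArrow ℝ ℝ (Fin N)))
      = fun (f : Fin N → ℝ×ℝ) (i : Fin N) => c i + a*(f i).1 + s*(f i).2 := by
    funext f
    simp [MeasurableEquiv.arrowProdEquivProdArrow, Equiv.arrowProdEquivProdArrow]
    rfl
  rw [hcomp2]
  exact (measurePreserving_pi (fun i => (gaussianReal (μm i) v).prod (gaussianReal 0 1))
    (fun i => gaussianReal (c i + a * μm i) (Real.toNNReal (a^2*(v:ℝ) + s^2)))
    (fun i => ⟨by fun_prop, gauss_scalar_step (c i) a s (μm i) v⟩)).map_eq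
lemma alphaBar_facts (T : ℕ) (β ᾱ : ℕ → ℝ)
    (hβ : ∀ s, 1 ≤ s → s ≤ T → 0 < β s ∧ β s < 1)
    (hᾱ : ∀ s, ᾱ s = ∏ n ∈ Finset.Icc 1 s, (1 - β n)) :
    ∀ s, s ≤ T → 0 < ᾱ s ∧ ᾱ s ≤ 1 ∧ (1 ≤ s → ᾱ s < 1) := by
  intro s
  induction s with
  | zero => intro _; simp [hᾱ 0]
  | succ n ih =>
    intro hsT
    have hn := ih (by omega)
    have hstep : ᾱ (n+1) = ᾱ n * (1 - β (n+1)) := by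
      rw [hᾱ, hᾱ, Finset.prod_Icc_succ_top (by omega)]
    have hb := hβ (n+1) (by omega) hsT
    refine ⟨by rw [hstep]; exact mul_pos hn.1 (by linarith [hb.2]), ?_, ?_⟩
    · rw [hstep]
      calc ᾱ n * (1 - β (n+1)) ≤ 1 * 1 := by
            apply mul_le_mul hn.2.1 (by linarith [hb.1]) (by linarith [hb.2]) zero_le_one
        _ = 1 := by ring
    · intro _
      rw [hstep]
      have h1 : ᾱ n * (1 - β (n+1)) < ᾱ n * 1 := by
        apply mul_lt_mul_of_pos_left (by linarith [hb.1]) hn.1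
      nlinarith [hn.2.1]

lemma Gamma_mul (T : ℕ) (β ᾱ : ℕ → ℝ) (Γ : ℕ → ℕ → ℝ)
    (hβ : ∀ s, 1 ≤ s → s ≤ T → 0 < β s ∧ β s < 1)
    (hᾱ : ∀ s, ᾱ s = ∏ n ∈ Finset.Icc 1 s, (1 - β n))
    (hΓ : ∀ i j, Γ i j =
      if j ≤ i then Real.sqrt (∏ n ∈ Finset.Icc j i, (1 - β n)) * (1 - ᾱ (j - 1)) / (1 - ᾱ i)
      else 1)
    (i j : ℕ) (hj1 : 1 ≤ j) (hji : j ≤ i) (hiT : i ≤ T) :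
    Γ j j * Γ i (j+1) = Γ i j := by
  have hfacts := alphaBar_facts T β ᾱ hβ hᾱ
  rcases eq_or_lt_of_le hji with rfl | hlt
  · rw [hΓ j (j+1), if_neg (by omega), mul_one]
  · have hαj : 0 < 1 - β j := by
      have := hβ j hj1 (by omega)
      linarith [this.2]
    have hBj : 1 - ᾱ j ≠ 0 := by
      have := (hfacts j (by omega)).2.2 hj1
      intro h; linarith
    have hBi : 1 - ᾱ i ≠ 0 := by
      have := (hfacts i hiT).2.2 (by omega)
      intro h; linarith
    rw [hΓ j j, if_pos le_rfl, hΓ i (j+1), if_pos (by omega), hΓ i j, if_pos hji]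
    have hsplit : (∏ n ∈ Finset.Icc j i, (1 - β n))
        = (1 - β j) * ∏ n ∈ Finset.Icc (j+1) i, (1 - β n) := by
      rw [← Finset.Ico_add_one_right_eq_Icc, ← Finset.Ico_add_one_right_eq_Icc,
        Finset.prod_eq_prod_Ico_succ_bot (by omega)]
    have hIccjj : (∏ n ∈ Finset.Icc j j, (1 - β n)) = 1 - β j := by
      rw [Finset.Icc_self, Finset.prod_singleton]
    have hj1' : (j + 1 - 1 : ℕ) = j := by omega
    rw [hsplit, hIccjj, hj1', Real.sqrt_mul hαj.le]
    field_simp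

/-- **Lemma 2 (k-fold composition of DDPM reverse transitions).**
With the noise schedule `β_1, …, β_T ∈ (0,1)`, `α_t = 1 − β_t`, `ᾱ_t = ∏_{s≤t} α_s`,
`γ_t = √ᾱ_{t−1} β_t/(1−ᾱ_t)`, `σ_t² = ((1−ᾱ_{t−1})/(1−ᾱ_t)) β_t` and
`Γ_i^j = √(∏_{n=j}^i α_n)·(1−ᾱ_{j−1})/(1−ᾱ_i)` for `i ≥ j` (`Γ_i^j = 1` for `i < j`):
if `X_t = x_t` and `X_{s−1} = γ_s x_0 + Γ_s^s X_s + σ_s Z_s` for independent standard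
Gaussian vectors `Z_t, …, Z_{t−k+1}` in `ℝ^N`, then `X_{t−k} ~ N(μ_{t,k}, σ²_{t,k} I_N)`
with `μ_{t,k} = (Σ_{i<k} Γ_{t−i−1}^{t−k+1} γ_{t−i}) x_0 + Γ_t^{t−k+1} x_t` and
`σ²_{t,k} = Σ_{i<k} (Γ_{t−i−1}^{t−k+1})² σ²_{t−i}`. -/
theorem k_step_reverse_transition
    (T : ℕ) (hT : 1 ≤ T) (β : ℕ → ℝ) (hβ : ∀ s, 1 ≤ s → s ≤ T → 0 < β s ∧ β s < 1)
    (ᾱ γ σ2 : ℕ → ℝ) (Γ : ℕ → ℕ → ℝ)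
    (hᾱ : ∀ s, ᾱ s = ∏ n ∈ Finset.Icc 1 s, (1 - β n))
    (hγ : ∀ s, γ s = Real.sqrt (ᾱ (s - 1)) * β s / (1 - ᾱ s))
    (hσ2 : ∀ s, σ2 s = (1 - ᾱ (s - 1)) / (1 - ᾱ s) * β s)
    (hΓ : ∀ i j, Γ i j =
      if j ≤ i then Real.sqrt (∏ n ∈ Finset.Icc j i, (1 - β n)) * (1 - ᾱ (j - 1)) / (1 - ᾱ i)
      else 1)
    (N : ℕ) (hN : 1 ≤ N)
    (t k : ℕ) (hk : 1 ≤ k) (hkt : k + 1 ≤ t) (htT : t ≤ T)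
    (x0 xt : Fin N → ℝ)
    (Ω : Type*) [MeasurableSpace Ω] (P : Measure Ω) [IsProbabilityMeasure P]
    (Z : Fin k → Ω → (Fin N → ℝ))
    (hZmeas : ∀ j, Measurable (Z j))
    (hZindep : iIndepFun Z P)
    (hZlaw : ∀ j, Measure.map (Z j) P = Measure.pi fun _ : Fin N => gaussianReal 0 1)
    (X : ℕ → Ω → (Fin N → ℝ))
    (hXt : X t = fun _ => xt)
    (hXstep : ∀ j : Fin k,
      X (t - (j : ℕ) - 1) = fun ω =>
        γ (t - (j : ℕ)) • x0 + Γ (t - (j : ℕ)) (t - (j : ℕ)) • X (t - (j : ℕ)) ω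
          + Real.sqrt (σ2 (t - (j : ℕ))) • Z j ω) :
    Measure.map (X (t - k)) P =
      Measure.pi fun i : Fin N =>
        gaussianReal
          (((∑ i' ∈ Finset.range k, Γ (t - i' - 1) (t - k + 1) * γ (t - i')) • x0
              + Γ t (t - k + 1) • xt) i)
          (Real.toNNReal
            (∑ i' ∈ Finset.range k, (Γ (t - i' - 1) (t - k + 1)) ^ 2 * σ2 (t - i'))) := by
  classical
  have hfacts := alphaBar_facts T β ᾱ hβ hᾱ
  have hΓmul := Gamma_mul T β ᾱ Γ hβ hᾱ hΓ
  have hΓone : ∀ i j, i < j → Γ i j = 1 := fun i j h => by rw [hΓ i j, if_neg (by omega)]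
  have hσ2nonneg : ∀ s, 1 ≤ s → s ≤ T → 0 ≤ σ2 s := by
    intro s hs1 hsT
    have h1 := (hfacts s hsT).2.2 hs1
    have h2 := (hfacts (s-1) (by omega)).2.1
    have h3 := (hβ s hs1 hsT).1
    rw [hσ2]
    apply mul_nonneg (div_nonneg (by linarith) (by linarith)) h3.le
  have main : ∀ m : ℕ, m ≤ k →
      (∃ F : ((Finset.univ.filter (fun j : Fin k => (j:ℕ) < m)) → (Fin N → ℝ)) → (Fin N → ℝ),
          Measurable F ∧ X (t - m) = fun ω => F (fun j => Z j ω)) ∧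
        Measure.map (X (t-m)) P = Measure.pi (fun i =>
          gaussianReal (((∑ i' ∈ Finset.range m, Γ (t-i'-1) (t-m+1) * γ (t-i')) • x0
              + Γ t (t-m+1) • xt) i)
            (Real.toNNReal (∑ i' ∈ Finset.range m, (Γ (t-i'-1) (t-m+1))^2 * σ2 (t-i')))) := by
    intro m
    induction m with
    | zero =>
      intro _
      constructor
      · exact ⟨fun _ => xt, measurable_const, by simpa using hXt⟩
      · simp only [Nat.sub_zero, Finset.range_zero, Finset.sum_empty, zero_smul, zero_add,
          Real.toNNReal_zero]
        rw [hXt, Measure.map_const, measure_univ, one_smul, hΓone t (t+1) (by omega), one_smul]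
        rw [← pi_dirac' xt]
        congr 1
        funext i
        rw [gaussianReal_zero_var]
    | succ m ih =>
      intro hm1
      obtain ⟨⟨F, hFmeas, hFeq⟩, hlaw⟩ := ih (by omega)
      have hmk : m < k := by omega
      set j0 : Fin k := ⟨m, hmk⟩ with hj0
      -- measurability of X (t-m)
      have hXmeas : Measurable (X (t-m)) := by
        rw [hFeq]
        exact hFmeas.comp (measurable_pi_lambda _ fun j => hZmeas j)
      -- independence of X (t-m) and Z j0
      have hdisj : Disjoint (Finset.univ.filter (fun j : Fin k => (j:ℕ) < m)) ({j0} : Finset (Fin k)) := by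
        simp only [Finset.disjoint_singleton_right, Finset.mem_filter]
        intro h
        exact absurd h.2 (by simp [hj0])
      have hindep : IndepFun (X (t-m)) (Z j0) P := by
        have h1 := (hZindep.indepFun_finset
          (Finset.univ.filter (fun j : Fin k => (j:ℕ) < m)) {j0} hdisj hZmeas).comp
          hFmeas (measurable_pi_apply (⟨j0, Finset.mem_singleton_self j0⟩ :
            ({j0} : Finset (Fin k))))
        have heq1 : (F ∘ fun a (i : (Finset.univ.filter (fun j : Fin k => (j:ℕ) < m))) => Z i a)
            = X (t - m) := by rw [hFeq]; rfl
        rw [heq1] at h1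
        exact h1
      -- the step equation
      have hstep := hXstep j0
      have hj0v : ((j0 : Fin k) : ℕ) = m := rfl
      rw [hj0v] at hstep
      have hsub : t - (m+1) = t - m - 1 := by omega
      -- index bounds
      have htm1 : 1 ≤ t - m := by omega
      have htmT : t - m ≤ T := by omega
      -- nonnegativity of old variance sum
      have hvar_nonneg : 0 ≤ ∑ i' ∈ Finset.range m, (Γ (t-i'-1) (t-m+1))^2 * σ2 (t-i') := by
        apply Finset.sum_nonneg
        intro i' hi'
        have hi'm : i' < m := Finset.mem_range.mp hi'
        exact mul_nonneg (sq_nonneg _) (hσ2nonneg (t-i') (by omega) (by omega))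
      -- apply the vector step
      have hnew := vector_step P (X (t-m)) (Z j0) hXmeas (hZmeas j0) hindep
        (fun i => ((∑ i' ∈ Finset.range m, Γ (t-i'-1) (t-m+1) * γ (t-i')) • x0
              + Γ t (t-m+1) • xt) i)
        (Real.toNNReal (∑ i' ∈ Finset.range m, (Γ (t-i'-1) (t-m+1))^2 * σ2 (t-i')))
        hlaw (hZlaw j0) (γ (t-m) • x0) (Γ (t-m) (t-m)) (Real.sqrt (σ2 (t-m)))
      rw [← hstep, ← hsub] at hnew
      -- algebraic identities
      have ht1 : t - (m+1) + 1 = t - m := by omega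
      have hΓterm : ∀ i' , i' < m → Γ (t-m) (t-m) * Γ (t-i'-1) ((t-m)+1) = Γ (t-i'-1) (t-m) :=
        fun i' h => hΓmul (t-i'-1) (t-m) htm1 (by omega) (by omega)
      have hΓt : Γ (t-m) (t-m) * Γ t ((t-m)+1) = Γ t (t-m) :=
        hΓmul t (t-m) htm1 (by omega) htT
      have hΓlast : Γ (t-(m+1)) (t-m) = 1 := hΓone _ _ (by omega)
      have hmean : ∀ i : Fin N,
          (γ (t-m) • x0) i + Γ (t-m) (t-m) *
            ((∑ i' ∈ Finset.range m, Γ (t-i'-1) (t-m+1) * γ (t-i')) • x0 + Γ t (t-m+1) • xt) i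
          = ((∑ i' ∈ Finset.range (m+1), Γ (t-i'-1) (t-(m+1)+1) * γ (t-i')) • x0
              + Γ t (t-(m+1)+1) • xt) i := by
        intro i
        have hsum2 : ∑ i' ∈ Finset.range m, Γ (t-i'-1) (t-m) * γ (t-i')
            = Γ (t-m) (t-m) * ∑ i' ∈ Finset.range m, Γ (t-i'-1) (t-m+1) * γ (t-i') := by
          rw [Finset.mul_sum]
          refine Finset.sum_congr rfl fun i' hi' => ?_
          rw [← mul_assoc, hΓterm i' (Finset.mem_range.mp hi')]
        have hmm : t - m - 1 = t - (m+1) := by omega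
        simp only [Pi.add_apply, Pi.smul_apply, smul_eq_mul, ht1, Finset.sum_range_succ,
          hmm, hΓlast, one_mul]
        linear_combination (-(x0 i)) * hsum2 + (xt i) * hΓt
      have hvar : Real.toNNReal ((Γ (t-m) (t-m))^2 *
            ((Real.toNNReal (∑ i' ∈ Finset.range m, (Γ (t-i'-1) (t-m+1))^2 * σ2 (t-i')) : ℝ))
            + (Real.sqrt (σ2 (t-m)))^2)
          = Real.toNNReal (∑ i' ∈ Finset.range (m+1), (Γ (t-i'-1) (t-(m+1)+1))^2 * σ2 (t-i')) := by
        rw [Real.coe_toNNReal _ hvar_nonneg, Real.sq_sqrt (hσ2nonneg (t-m) htm1 htmT)]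
        congr 1
        have hsumv : ∑ i' ∈ Finset.range m, (Γ (t-i'-1) (t-m))^2 * σ2 (t-i')
            = (Γ (t-m) (t-m))^2 * ∑ i' ∈ Finset.range m, (Γ (t-i'-1) (t-m+1))^2 * σ2 (t-i') := by
          rw [Finset.mul_sum]
          refine Finset.sum_congr rfl fun i' hi' => ?_
          rw [← mul_assoc, ← mul_pow, hΓterm i' (Finset.mem_range.mp hi')]
        have hmm : t - m - 1 = t - (m+1) := by omega
        simp only [ht1, Finset.sum_range_succ, hmm, hΓlast, one_pow, one_mul]
        linear_combination (-1 : ℝ) * hsumv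
      refine ⟨?_, ?_⟩
      · -- existence of measurable representation
        refine ⟨fun g => γ (t-m) • x0 + Γ (t-m) (t-m) •
            F (fun i => g ⟨(i : Fin k), by
              simp only [Finset.mem_filter, Finset.mem_univ, true_and]
              have := (Finset.mem_filter.mp i.2).2
              omega⟩)
            + Real.sqrt (σ2 (t-m)) • g ⟨j0, by
              simp only [Finset.mem_filter, Finset.mem_univ, true_and]; omega⟩, ?_, ?_⟩
        · fun_prop
        · rw [hsub, hstep]
          funext ω
          simp only []
          rw [hFeq]
      · rw [hnew]
        refine congrArg Measure.pi ?_
        funext i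
        rw [hmean i, hvar]
  exact (main k le_rfl).2
end

section
/- Fix a noise schedule as in the context. Then for all integers t, k with k ≥ 1, t ≤ T and t − k ≥ 1, the following recursion for the variance coefficients holds: (Γ_{t−k}^{t−k})² · (Σ_{i=0}^{k−1} (Γ_{t−i−1}^{t−k+1})² σ²_{t−i}) + σ²_{t−k} = Σ_{i=0}^{k} (Γ_{t−i−1}^{t−k})² σ²_{t−i}. -/
open Finset

/-- **Recursion for the variance coefficients of the k-step reverse transition.**
With `α_t = 1 − β_t`, `ᾱ_t = ∏_{s≤t} α_s`, `σ_t² = ((1−ᾱ_{t−1})/(1−ᾱ_t)) β_t` and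
`Γ_i^j = √(∏_{n=j}^i α_n)·(1−ᾱ_{j−1})/(1−ᾱ_i)` for `i ≥ j` (`Γ_i^j = 1` for `i < j`),
for all `k ≥ 1`, `t ≤ T`, `t − k ≥ 1`:
`(Γ_{t−k}^{t−k})²·(Σ_{i<k} (Γ_{t−i−1}^{t−k+1})² σ²_{t−i}) + σ²_{t−k}
  = Σ_{i≤k} (Γ_{t−i−1}^{t−k})² σ²_{t−i}`. -/
theorem variance_coefficient_recursion
    (T : ℕ) (hT : 1 ≤ T) (β : ℕ → ℝ) (hβ : ∀ s, 1 ≤ s → s ≤ T → 0 < β s ∧ β s < 1)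
    (ᾱ σ2 : ℕ → ℝ) (Γ : ℕ → ℕ → ℝ)
    (hᾱ : ∀ s, ᾱ s = ∏ n ∈ Finset.Icc 1 s, (1 - β n))
    (hσ2 : ∀ s, σ2 s = (1 - ᾱ (s - 1)) / (1 - ᾱ s) * β s)
    (hΓ : ∀ i j, Γ i j =
      if j ≤ i then Real.sqrt (∏ n ∈ Finset.Icc j i, (1 - β n)) * (1 - ᾱ (j - 1)) / (1 - ᾱ i)
      else 1) :
    ∀ t k : ℕ, 1 ≤ k → t ≤ T → k + 1 ≤ t →
      (Γ (t - k) (t - k)) ^ 2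
            * (∑ i ∈ Finset.range k, (Γ (t - i - 1) (t - k + 1)) ^ 2 * σ2 (t - i))
          + σ2 (t - k)
        = ∑ i ∈ Finset.range (k + 1), (Γ (t - i - 1) (t - k)) ^ 2 * σ2 (t - i) := by
  -- basic positivity facts
  have hfac : ∀ n, 1 ≤ n → n ≤ T → 0 < 1 - β n := by
    intro n h1 h2
    have := (hβ n h1 h2).2
    linarith
  have hprod_pos : ∀ l u : ℕ, 1 ≤ l → u ≤ T → 0 < ∏ n ∈ Finset.Icc l u, (1 - β n) := by
    intro l u hl hu
    apply Finset.prod_pos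
    intro n hn
    rw [Finset.mem_Icc] at hn
    exact hfac n (le_trans hl hn.1) (le_trans hn.2 hu)
  have hᾱlt : ∀ s, 1 ≤ s → s ≤ T → ᾱ s < 1 := by
    intro s h1 h2
    rw [hᾱ s, ← Finset.prod_Ico_mul_eq_prod_Icc h1]
    have hle1 : (∏ n ∈ Finset.Ico 1 s, (1 - β n)) ≤ 1 := by
      apply Finset.prod_le_one
      · intro n hn
        rw [Finset.mem_Ico] at hn
        exact le_of_lt (hfac n hn.1 (le_trans (le_of_lt hn.2) h2))
      · intro n hn
        rw [Finset.mem_Ico] at hn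
        have := (hβ n hn.1 (le_trans (le_of_lt hn.2) h2)).1
        linarith
    have hpos : 0 < ∏ n ∈ Finset.Ico 1 s, (1 - β n) := by
      apply Finset.prod_pos
      intro n hn
      rw [Finset.mem_Ico] at hn
      exact hfac n hn.1 (le_trans (le_of_lt hn.2) h2)
    have hs1 : 1 - β s < 1 := by have := (hβ s h1 h2).1; linarith
    calc (∏ n ∈ Finset.Ico 1 s, (1 - β n)) * (1 - β s)
        ≤ 1 * (1 - β s) := by
          apply mul_le_mul_of_nonneg_right hle1 (le_of_lt (hfac s h1 h2))
      _ = 1 - β s := one_mul _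
      _ < 1 := hs1
  -- the key per-term identity
  intro t k hk ht htk
  set m := t - k with hm
  have hm1 : 1 ≤ m := by omega
  have hmT : m ≤ T := by omega
  have hBne : (1 - ᾱ m) ≠ 0 := by
    have := hᾱlt m hm1 hmT
    intro h; linarith
  have key : ∀ a : ℕ, m ≤ a → a ≤ T →
      Γ m m ^ 2 * Γ a (m + 1) ^ 2 = Γ a m ^ 2 := by
    intro a hma haT
    rcases eq_or_lt_of_le hma with h | h
    · rw [← h, hΓ m (m + 1), if_neg (by omega)]
      ring
    · have hm1a : m + 1 ≤ a := h
      rw [hΓ m m, hΓ a (m + 1), hΓ a m, if_pos (le_refl m), if_pos hm1a, if_pos hma]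
      have hms : (m + 1 - 1 : ℕ) = m := by omega
      rw [hms]
      have hP1 : (0:ℝ) ≤ ∏ n ∈ Finset.Icc m m, (1 - β n) :=
        le_of_lt (hprod_pos m m hm1 hmT)
      have hP2 : (0:ℝ) ≤ ∏ n ∈ Finset.Icc (m+1) a, (1 - β n) :=
        le_of_lt (hprod_pos (m+1) a (by omega) haT)
      have hsplit : (1 - β m) * ∏ n ∈ Finset.Icc (m+1) a, (1 - β n)
          = ∏ n ∈ Finset.Icc m a, (1 - β n) := by
        rw [Finset.Icc_add_one_left_eq_Ioc]
        exact Finset.mul_prod_Ioc_eq_prod_Icc (f := fun n => 1 - β n) hma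
      have e1 : Real.sqrt (1 - β m) ^ 2 = 1 - β m :=
        Real.sq_sqrt (le_of_lt (hfac m hm1 hmT))
      have e2 : Real.sqrt (∏ n ∈ Finset.Icc (m+1) a, (1 - β n)) ^ 2
          = ∏ n ∈ Finset.Icc (m+1) a, (1 - β n) := Real.sq_sqrt hP2
      have e3 : Real.sqrt (∏ n ∈ Finset.Icc m a, (1 - β n)) ^ 2
          = ∏ n ∈ Finset.Icc m a, (1 - β n) :=
        Real.sq_sqrt (le_of_lt (hprod_pos m a hm1 haT))
      have haNe : (1 - ᾱ a) ≠ 0 := by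
        have := hᾱlt a (le_trans hm1 hma) haT
        intro hc; linarith
      field_simp
      rw [Finset.Icc_self, Finset.prod_singleton, e1, e2, e3, ← hsplit]
      ring
  rw [Finset.sum_range_succ]
  have hlast : (t - k - 1 : ℕ) < t - k := by omega
  rw [hΓ (t - k - 1) (t - k), if_neg (by omega), one_pow, one_mul]
  rw [Finset.mul_sum]
  congr 1
  apply Finset.sum_congr rfl
  intro i hi
  rw [Finset.mem_range] at hi
  have ha1 : m ≤ t - i - 1 := by omega
  have ha2 : t - i - 1 ≤ T := by omega
  have hrw : t - k + 1 = m + 1 := rfl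
  rw [← mul_assoc, hrw, key (t - i - 1) ha1 ha2]
end

section
/- Let M, N ≥ 1, let A be a real M × N matrix with operator norm ‖A‖₂ ≤ 1, let 0 ≤ σ_y ≤ 1, and let x_0 ∈ ℝ^N. Let β_t ∈ (0,1) for all integers t ≥ 1 and set ᾱ_t := ∏_{s=1}^t (1 − β_s); assume ᾱ_t → 0 as t → ∞. Let n ~ N(0, σ_y² I_M) and ε ~ N(0, I_N) be independent Gaussian vectors, set y := A x_0 + n and x̃_t := x_0 + √((1 − ᾱ_t)/ᾱ_t) · ε. Then for every w ∈ (0,1) there exists τ ∈ ℕ such that for all t > τ: E‖x_0 − Aᵀ y‖² ≤ E‖x_0 − (w Aᵀ y + (1 − w) x̃_t)‖². -/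
open MeasureTheory ProbabilityTheory Finset Filter
open scoped NNReal ENNReal

lemma my_map_eval_pi {k : ℕ} (μ : Fin k → Measure ℝ) [∀ i, IsProbabilityMeasure (μ i)]
    (i : Fin k) :
    Measure.map (fun x : Fin k → ℝ => x i) (Measure.pi μ) = μ i := by
  ext s hs
  rw [Measure.map_apply (measurable_pi_apply i) hs]
  have h1 : (fun x : Fin k → ℝ => x i) ⁻¹' s
      = Set.pi Set.univ (Function.update (fun _ : Fin k => (Set.univ : Set ℝ)) i s) := by
    rw [← Set.eval_preimage]
  rw [h1, Measure.pi_pi]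
  rw [Finset.prod_eq_single i]
  · rw [Function.update_self]
  · intro j _ hj
    rw [Function.update_of_ne hj]
    simp
  · simp

lemma my_memℒp_two_id_gaussianReal (v : ℝ≥0) : MemLp id 2 (gaussianReal 0 v) := by
  by_cases hv : v = 0
  · subst hv
    rw [gaussianReal_zero_var]
    refine (memLp_const (0 : ℝ)).ae_eq ?_
    rw [Filter.EventuallyEq, MeasureTheory.ae_dirac_eq]
    simp
  · rw [memLp_two_iff_integrable_sq aestronglyMeasurable_id,
      gaussianReal_of_var_ne_zero 0 hv]
    rw [integrable_withDensity_iff (measurable_gaussianPDF 0 v)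
      (Filter.Eventually.of_forall fun x => ENNReal.ofReal_lt_top)]
    have hb : (0:ℝ) < (2 * (v:ℝ))⁻¹ := by positivity
    have key : Integrable (fun x : ℝ => x ^ (2:ℝ) * Real.exp (-(2 * (v:ℝ))⁻¹ * x ^ 2)) :=
      integrable_rpow_mul_exp_neg_mul_sq hb (by norm_num)
    have key2 : Integrable (fun x : ℝ => x ^ 2 * Real.exp (-(2 * (v:ℝ))⁻¹ * x ^ 2)) := by
      refine key.congr ?_
      filter_upwards with x
      rw [show ((2:ℝ) : ℝ) = ((2:ℕ):ℝ) by norm_num, Real.rpow_natCast]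
    have := (key2.const_mul (Real.sqrt (2 * Real.pi * v))⁻¹)
    refine this.congr ?_
    filter_upwards with x
    rw [gaussianPDF, ENNReal.toReal_ofReal (gaussianPDFReal_nonneg _ _ _), gaussianPDFReal]
    have harg : -(x - 0) ^ 2 / (2 * (v:ℝ)) = -(2 * (v:ℝ))⁻¹ * x ^ 2 := by
      field_simp
      ring
    rw [harg]
    simp only [id_eq]
    ring

lemma my_integral_id_gaussianReal (v : ℝ≥0) : ∫ x, x ∂gaussianReal 0 v = 0 := by
  have hi : Integrable (id : ℝ → ℝ) (gaussianReal 0 v) :=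
    (my_memℒp_two_id_gaussianReal v).integrable one_le_two
  have hmap : (gaussianReal 0 v).map (fun x => -1 * x) = gaussianReal 0 v := by
    rw [show (fun x : ℝ => -1 * x) = ((-1 : ℝ) * ·) from rfl, gaussianReal_map_const_mul (-1)]
    congr 1
    · ring
    · ext
      push_cast
      norm_num
  have h2' : ∫ x, x ∂((gaussianReal 0 v).map (fun x => -1 * x)) = ∫ x, -1 * x ∂gaussianReal 0 v :=
    integral_map (by fun_prop) aestronglyMeasurable_id
  have h2 : ∫ x, x ∂gaussianReal 0 v = ∫ x, -1 * x ∂gaussianReal 0 v := by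
    rw [← h2', hmap]
  have h3 : ∫ x, -1 * x ∂gaussianReal 0 v = -∫ x, x ∂gaussianReal 0 v := by
    simp only [neg_one_mul]
    exact integral_neg _
  linarith [h2, h3]

lemma my_sq_moment_pos : 0 < ∫ x, x ^ 2 ∂gaussianReal 0 1 := by
  have hint : Integrable (fun x : ℝ => x ^ 2) (gaussianReal 0 1) := by
    have := (my_memℒp_two_id_gaussianReal 1).integrable_sq
    simpa using this
  rw [integral_pos_iff_support_of_nonneg (fun x => sq_nonneg x) hint]
  have hs : Function.support (fun x : ℝ => x ^ 2) = {(0:ℝ)}ᶜ := by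
    ext x
    simp [Function.mem_support, pow_eq_zero_iff]
  rw [hs]
  have h0 : gaussianReal 0 1 {(0:ℝ)} = 0 :=
    gaussianReal_absolutelyContinuous 0 one_ne_zero (measure_singleton 0)
  have := measure_compl (measurableSet_singleton (0:ℝ)) (measure_ne_top (gaussianReal 0 1) _)
  rw [h0, measure_univ] at this
  rw [this]
  norm_num

lemma my_coord_facts {k : ℕ} {Ω : Type*} [MeasurableSpace Ω] (P : Measure Ω)
    [IsProbabilityMeasure P] (X : Ω → Fin k → ℝ) (hX : Measurable X) (v : ℝ≥0)
    (hlaw : Measure.map X P = Measure.pi fun _ : Fin k => gaussianReal 0 v) (i : Fin k) :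
    MemLp (fun ω => X ω i) 2 P ∧ (∫ ω, X ω i ∂P) = 0 ∧
      (∫ ω, (X ω i) ^ 2 ∂P) = ∫ x, x ^ 2 ∂gaussianReal 0 v := by
  have hXi : Measurable fun ω => X ω i := (measurable_pi_apply i).comp hX
  have hmap : Measure.map (fun ω => X ω i) P = gaussianReal 0 v := by
    rw [show (fun ω => X ω i) = (fun x : Fin k → ℝ => x i) ∘ X from rfl,
      ← Measure.map_map (measurable_pi_apply i) hX, hlaw, my_map_eval_pi]
  refine ⟨?_, ?_, ?_⟩
  · have h := my_memℒp_two_id_gaussianReal v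
    rw [← hmap] at h
    exact (memLp_map_measure_iff aestronglyMeasurable_id hXi.aemeasurable).mp h
  · have h4 : ∫ ω, X ω i ∂P = ∫ x, x ∂(Measure.map (fun ω => X ω i) P) :=
      (integral_map hXi.aemeasurable aestronglyMeasurable_id).symm
    rw [h4, hmap, my_integral_id_gaussianReal]
  · have h5 : ∫ ω, (X ω i) ^ 2 ∂P = ∫ x, x ^ 2 ∂(Measure.map (fun ω => X ω i) P) :=
      (integral_map hXi.aemeasurable ((measurable_id.pow_const 2).aestronglyMeasurable)).symm
    rw [h5, hmap]

/-- **Proposition 1.**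
Let `y = A x_0 + n` with `n ~ N(0, σ_y² I_M)`, `‖A‖₂ ≤ 1` (expressed as
`Σ (A v)_i² ≤ Σ v_i²` for every `v`), `0 ≤ σ_y ≤ 1`, and let
`x̃_t = x_0 + √((1−ᾱ_t)/ᾱ_t) ε` with `ε ~ N(0, I_N)` independent of `n`, where
`ᾱ_t = ∏_{s≤t}(1−β_s) → 0`. Then for every `w ∈ (0,1)` there is a timestep `τ` such that
for all `t > τ` the back-projection `Aᵀy` approximates `x_0` at least as well in MSE as the
convex combination `w Aᵀy + (1−w) x̃_t`. -/
theorem backprojection_beats_convex_combination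
    (M N : ℕ) (hM : 1 ≤ M) (hN : 1 ≤ N)
    (A : Matrix (Fin M) (Fin N) ℝ)
    (hA : ∀ v : Fin N → ℝ, ∑ i, (A.mulVec v i) ^ 2 ≤ ∑ i, (v i) ^ 2)
    (σy : ℝ) (hσ0 : 0 ≤ σy) (hσ1 : σy ≤ 1)
    (x0 : Fin N → ℝ)
    (β : ℕ → ℝ) (hβ : ∀ t, 1 ≤ t → 0 < β t ∧ β t < 1)
    (ᾱ : ℕ → ℝ) (hᾱ : ∀ t, ᾱ t = ∏ s ∈ Finset.Icc 1 t, (1 - β s))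
    (hᾱlim : Tendsto ᾱ atTop (nhds 0))
    (Ω : Type*) [MeasurableSpace Ω] (P : Measure Ω) [IsProbabilityMeasure P]
    (n : Ω → (Fin M → ℝ)) (ε : Ω → (Fin N → ℝ))
    (hnmeas : Measurable n) (hεmeas : Measurable ε)
    (hindep : IndepFun n ε P)
    (hnlaw : Measure.map n P =
      Measure.pi fun _ : Fin M => gaussianReal 0 ⟨σy ^ 2, sq_nonneg _⟩)
    (hεlaw : Measure.map ε P = Measure.pi fun _ : Fin N => gaussianReal 0 1) :
    ∀ w : ℝ, 0 < w → w < 1 → ∃ τ : ℕ, ∀ t : ℕ, τ < t →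
      (∫ ω, ∑ i, (x0 i - A.transpose.mulVec (A.mulVec x0 + n ω) i) ^ 2 ∂P)
        ≤ ∫ ω, ∑ i,
            (x0 i - (w • A.transpose.mulVec (A.mulVec x0 + n ω)
              + (1 - w) • (x0 + Real.sqrt ((1 - ᾱ t) / ᾱ t) • ε ω)) i) ^ 2 ∂P := by
  intro w hw0 hw1
  have hnfacts := fun j => my_coord_facts P n hnmeas ⟨σy ^ 2, sq_nonneg _⟩ hnlaw j
  have hεfacts := fun i => my_coord_facts P ε hεmeas 1 hεlaw i
  set m₂ := ∫ x, x ^ 2 ∂gaussianReal 0 1 with hm₂def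
  have hm₂ : 0 < m₂ := my_sq_moment_pos
  set b : Fin N → ℝ := fun i => x0 i - A.transpose.mulVec (A.mulVec x0) i with hbdef
  set g : Ω → Fin N → ℝ := fun ω i => b i - ∑ j, A j i * n ω j with hgdef
  have hpoint : ∀ ω i, x0 i - A.transpose.mulVec (A.mulVec x0 + n ω) i = g ω i := by
    intro ω i
    simp only [hgdef, hbdef, Matrix.mulVec_add, Pi.add_apply, Matrix.mulVec,
      dotProduct, Matrix.transpose_apply, mul_add, Finset.sum_add_distrib]
    ring
  have hg2 : ∀ i, MemLp (fun ω => g ω i) 2 P := by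
    intro i
    have hsum : MemLp (fun ω => ∑ j, A j i * n ω j) 2 P :=
      memLp_finset_sum Finset.univ fun j _ => ((hnfacts j).1).const_mul (A j i)
    exact (memLp_const (b i)).sub hsum
  have hgε_indep : ∀ i, IndepFun (fun ω => g ω i) (fun ω => ε ω i) P := by
    intro i
    have hφ : Measurable (fun u : Fin M → ℝ => b i - ∑ j, A j i * u j) :=
      measurable_const.sub
        (Finset.measurable_sum _ fun j _ => (measurable_pi_apply (X := fun _ : Fin M => ℝ) j).const_mul (A j i))
    exact hindep.comp hφ (measurable_pi_apply i)
  have hgi : ∀ i, Integrable (fun ω => g ω i) P := fun i => (hg2 i).integrable one_le_two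
  have hεi : ∀ i, Integrable (fun ω => ε ω i) P :=
    fun i => ((hεfacts i).1).integrable one_le_two
  have hgg : Integrable (fun ω => ∑ i, (g ω i) ^ 2) P :=
    integrable_finset_sum _ fun i _ => (hg2 i).integrable_sq
  have hεε : Integrable (fun ω => ∑ i, (ε ω i) ^ 2) P :=
    integrable_finset_sum _ fun i _ => ((hεfacts i).1).integrable_sq
  have hgε : ∀ i, Integrable (fun ω => g ω i * ε ω i) P :=
    fun i => (hgε_indep i).integrable_mul (hgi i) (hεi i)
  have hgεs : Integrable (fun ω => ∑ i, g ω i * ε ω i) P :=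
    integrable_finset_sum _ fun i _ => hgε i
  have hcross : (∫ ω, ∑ i, g ω i * ε ω i ∂P) = 0 := by
    rw [integral_finset_sum _ fun i _ => hgε i]
    refine Finset.sum_eq_zero fun i _ => ?_
    rw [(hgε_indep i).integral_fun_mul_eq_mul_integral (hgi i).aestronglyMeasurable (hεi i).aestronglyMeasurable,
      (hεfacts i).2.1, mul_zero]
  have hεval : (∫ ω, ∑ i, (ε ω i) ^ 2 ∂P) = (N : ℝ) * m₂ := by
    rw [integral_finset_sum _ fun i _ => ((hεfacts i).1).integrable_sq]
    rw [Finset.sum_congr rfl fun i _ => ((hεfacts i).2.2).trans hm₂def.symm,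
      Finset.sum_const, Finset.card_univ, Fintype.card_fin, nsmul_eq_mul]
  set L := ∫ ω, ∑ i, (g ω i) ^ 2 ∂P with hLdef
  have hL0 : 0 ≤ L :=
    integral_nonneg fun ω => Finset.sum_nonneg fun i _ => sq_nonneg _
  have hN0 : (0 : ℝ) < N := by exact_mod_cast hN
  have hD : 0 < (1 - w) ^ 2 * ((N : ℝ) * m₂) :=
    mul_pos (pow_pos (by linarith) 2) (mul_pos hN0 hm₂)
  set K := (1 - w ^ 2) * L / ((1 - w) ^ 2 * ((N : ℝ) * m₂)) with hKdef
  have hK0 : 0 ≤ K := div_nonneg (mul_nonneg (by nlinarith) hL0) hD.le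
  set δ := (K + 2)⁻¹ with hδdef
  have hδ0 : 0 < δ := by rw [hδdef]; positivity
  obtain ⟨τ₀, hτ₀⟩ := Filter.eventually_atTop.mp (hᾱlim.eventually (gt_mem_nhds hδ0))
  refine ⟨τ₀ + 1, fun t ht => ?_⟩
  have hαδ : ᾱ t < δ := hτ₀ t (by omega)
  have hαpos : 0 < ᾱ t := by
    rw [hᾱ]
    refine Finset.prod_pos fun s hs => ?_
    have := (hβ s (Finset.mem_Icc.mp hs).1).2
    linarith
  have hδhalf : δ ≤ 1 / 2 := by
    rw [hδdef]
    rw [inv_le_comm₀ (by linarith) (by norm_num)]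
    linarith
  set r := (1 - ᾱ t) / ᾱ t with hrdef
  have hr0 : 0 ≤ r := div_nonneg (by linarith) hαpos.le
  have hs2 : Real.sqrt r ^ 2 = r := Real.sq_sqrt hr0
  have hrK : K ≤ r := by
    have h1 : (1 - δ) / δ ≤ r := div_le_div₀ (by linarith) (by linarith) hαpos hαδ.le
    have hK2 : K + 2 ≠ 0 := by positivity
    have h2 : (1 - δ) / δ = K + 1 := by
      rw [hδdef]
      field_simp
      ring
    linarith
  have hLHS : (∫ ω, ∑ i, (x0 i - A.transpose.mulVec (A.mulVec x0 + n ω) i) ^ 2 ∂P) = L := by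
    rw [hLdef]
    congr 1
    funext ω
    exact Finset.sum_congr rfl fun i _ => by rw [hpoint ω i]
  set c := (1 - w) * Real.sqrt r with hcdef
  have hRHSfun : (fun ω => ∑ i, (x0 i - (w • A.transpose.mulVec (A.mulVec x0 + n ω)
        + (1 - w) • (x0 + Real.sqrt r • ε ω)) i) ^ 2)
      = fun ω => w ^ 2 * (∑ i, (g ω i) ^ 2) - (2 * w * c) * (∑ i, g ω i * ε ω i)
        + c ^ 2 * (∑ i, (ε ω i) ^ 2) := by
    funext ω
    rw [Finset.mul_sum, Finset.mul_sum, Finset.mul_sum, ← Finset.sum_sub_distrib,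
      ← Finset.sum_add_distrib]
    refine Finset.sum_congr rfl fun i _ => ?_
    have hg' := hpoint ω i
    simp only [Pi.add_apply, Pi.smul_apply, smul_eq_mul]
    rw [← hg', hcdef]
    ring
  have hRHS : (∫ ω, ∑ i, (x0 i - (w • A.transpose.mulVec (A.mulVec x0 + n ω)
        + (1 - w) • (x0 + Real.sqrt r • ε ω)) i) ^ 2 ∂P)
      = w ^ 2 * L - (2 * w * c) * 0 + c ^ 2 * ((N : ℝ) * m₂) := by
    have I1 : Integrable (fun ω => w ^ 2 * (∑ i, (g ω i) ^ 2)
        - (2 * w * c) * (∑ i, g ω i * ε ω i)) P :=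
      ((hgg.const_mul (w ^ 2)).sub (hgεs.const_mul (2 * w * c)) : _)
    rw [hRHSfun, integral_add I1 (hεε.const_mul (c ^ 2)),
      integral_sub (hgg.const_mul (w ^ 2)) (hgεs.const_mul (2 * w * c)),
      integral_const_mul, integral_const_mul, integral_const_mul, hcross, hεval, ← hLdef]
  rw [hLHS, hRHS]
  have hc2 : c ^ 2 = (1 - w) ^ 2 * r := by rw [hcdef, mul_pow, hs2]
  have hKD : K * ((1 - w) ^ 2 * ((N : ℝ) * m₂)) = (1 - w ^ 2) * L :=
    div_mul_cancel₀ _ hD.ne'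
  have hrD : K * ((1 - w) ^ 2 * ((N : ℝ) * m₂)) ≤ r * ((1 - w) ^ 2 * ((N : ℝ) * m₂)) :=
    mul_le_mul_of_nonneg_right hrK hD.le
  rw [hc2]
  nlinarith [hrD, hKD]
end

section
/- Let M, N ≥ 1, let A be a real M × N matrix, let x_0 ∈ ℝ^N, let σ_y ≥ 0, σ̃ ≥ 0 and w ∈ ℝ. Let n ~ N(0, σ_y² I_M) and ε ~ N(0, I_N) be independent Gaussian vectors, and set y := A x_0 + n and x̃ := x_0 + σ̃ ε. Then E‖x_0 − (w Aᵀ y + (1 − w) x̃)‖² = w² (‖(I_N − Aᵀ A) x_0‖² + σ_y² ‖A‖_F²) + (1 − w)² σ̃² N. -/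
open MeasureTheory ProbabilityTheory Finset

namespace FusedMSE

open Real
open scoped ENNReal NNReal


lemma gauss_int_eq (v : ℝ≥0) (hv : v ≠ 0) (g : ℝ → ℝ) :
    ∫ x, g x ∂(gaussianReal 0 v) = ∫ x, gaussianPDFReal 0 v x * g x := by
  rw [gaussianReal_of_var_ne_zero _ hv]
  have h : gaussianPDF 0 v
      = fun x => ((Real.toNNReal (gaussianPDFReal 0 v x) : ℝ≥0) : ℝ≥0∞) := rfl
  rw [h, integral_withDensity_eq_integral_smul
    ((measurable_gaussianPDFReal 0 v).real_toNNReal)]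
  refine integral_congr_ae (ae_of_all _ fun x => ?_)
  simp [NNReal.smul_def, Real.coe_toNNReal _ (gaussianPDFReal_nonneg 0 v x)]

lemma gauss_integrable_iff (v : ℝ≥0) (hv : v ≠ 0) (g : ℝ → ℝ) :
    Integrable g (gaussianReal 0 v)
      ↔ Integrable (fun x => gaussianPDFReal 0 v x * g x) volume := by
  rw [gaussianReal_of_var_ne_zero _ hv]
  have h : gaussianPDF 0 v
      = fun x => ((Real.toNNReal (gaussianPDFReal 0 v x) : ℝ≥0) : ℝ≥0∞) := rfl
  rw [h, integrable_withDensity_iff_integrable_smul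
    ((measurable_gaussianPDFReal 0 v).real_toNNReal)]
  constructor <;> intro hI <;> refine hI.congr (ae_of_all _ fun x => ?_) <;>
    simp [NNReal.smul_def, Real.coe_toNNReal _ (gaussianPDFReal_nonneg 0 v x)]

lemma pdf_eq (v : ℝ≥0) (x : ℝ) :
    gaussianPDFReal 0 v x = (√(2 * π * v))⁻¹ * rexp (-(2 * (v:ℝ))⁻¹ * x ^ 2) := by
  rw [gaussianPDFReal]
  congr 1
  rw [sub_zero]
  congr 1
  field_simp

lemma integral_mul_exp_odd {b : ℝ} : ∫ x : ℝ, x * rexp (-b * x ^ 2) = 0 := by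
  have h1 := integral_neg_eq_self (fun y : ℝ => y * rexp (-b * y ^ 2)) volume
  have h2 : (fun x : ℝ => (fun y : ℝ => y * rexp (-b * y ^ 2)) (-x))
      = fun x : ℝ => -(x * rexp (-b * x ^ 2)) := by
    funext x
    show (-x) * rexp (-b * (-x) ^ 2) = -(x * rexp (-b * x ^ 2))
    rw [neg_sq]; ring
  rw [h2, integral_neg] at h1
  linarith

lemma integral_sq_exp {b : ℝ} (hb : 0 < b) :
    ∫ x : ℝ, x ^ 2 * rexp (-b * x ^ 2) = b ^ (-(3:ℝ)/2) * (√π / 2) := by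
  have habs := integral_comp_abs (f := fun y : ℝ => y ^ 2 * rexp (-b * y ^ 2))
  simp only [sq_abs] at habs
  have hIoi : ∫ x in Set.Ioi (0:ℝ), x ^ 2 * rexp (-b * x ^ 2)
      = ∫ x in Set.Ioi (0:ℝ), x ^ (2:ℝ) * rexp (-b * x ^ (2:ℝ)) := by
    refine setIntegral_congr_fun measurableSet_Ioi fun x hx => ?_
    rw [show ((2:ℝ)) = ((2:ℕ):ℝ) by norm_num, Real.rpow_natCast]
  have hval := integral_rpow_mul_exp_neg_mul_rpow (p := 2) (q := 2) (b := b)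
    (by norm_num) (by norm_num) hb
  have hgamma : Real.Gamma ((2 + 1) / 2) = (1/2) * √π := by
    rw [show ((2:ℝ) + 1) / 2 = 1/2 + 1 by norm_num,
      Real.Gamma_add_one (by norm_num), Real.Gamma_one_half_eq]
  rw [habs, hIoi, hval, hgamma]
  rw [show (-((2:ℝ) + 1) / 2) = -(3:ℝ)/2 by norm_num]
  ring

-- (copies of aux1/aux2 assumed; will concatenate later)

lemma gauss_integrable_id (v : ℝ≥0) : Integrable (fun x : ℝ => x) (gaussianReal 0 v) := by
  by_cases hv : v = 0
  · rw [hv, gaussianReal_zero_var]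
    exact (integrable_const ((fun x : ℝ => x) 0)).congr (ae_eq_dirac (fun x : ℝ => x)).symm
  · have hvpos : (0:ℝ) < v := lt_of_le_of_ne v.coe_nonneg (by exact_mod_cast (Ne.symm hv))
    have hb : (0:ℝ) < (2 * (v:ℝ))⁻¹ := by positivity
    rw [gauss_integrable_iff v hv]
    have := (integrable_mul_exp_neg_mul_sq hb).const_mul (√(2 * π * v))⁻¹
    refine this.congr (ae_of_all _ fun x => ?_)
    dsimp only; rw [pdf_eq]; ring

lemma gauss_integral_id (v : ℝ≥0) : ∫ x, (x : ℝ) ∂(gaussianReal 0 v) = 0 := by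
  by_cases hv : v = 0
  · rw [hv, gaussianReal_zero_var, integral_dirac]
  · rw [gauss_int_eq v hv]
    have heq : (fun x : ℝ => gaussianPDFReal 0 v x * x)
        = fun x : ℝ => (√(2 * π * v))⁻¹ * (x * rexp (-(2 * (v:ℝ))⁻¹ * x ^ 2)) := by
      funext x; rw [pdf_eq]; ring
    rw [heq, integral_const_mul, integral_mul_exp_odd, mul_zero]

lemma gauss_integrable_sq (v : ℝ≥0) : Integrable (fun x : ℝ => x ^ 2) (gaussianReal 0 v) := by
  by_cases hv : v = 0
  · rw [hv, gaussianReal_zero_var]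
    exact (integrable_const ((fun x : ℝ => x ^ 2) 0)).congr
      (ae_eq_dirac (fun x : ℝ => x ^ 2)).symm
  · have hvpos : (0:ℝ) < v := lt_of_le_of_ne v.coe_nonneg (by exact_mod_cast (Ne.symm hv))
    have hb : (0:ℝ) < (2 * (v:ℝ))⁻¹ := by positivity
    rw [gauss_integrable_iff v hv]
    have := (integrable_rpow_mul_exp_neg_mul_sq hb (s := 2) (by norm_num)).const_mul
      (√(2 * π * v))⁻¹
    refine this.congr (ae_of_all _ fun x => ?_)
    dsimp only
    rw [pdf_eq, show ((2:ℝ)) = ((2:ℕ):ℝ) by norm_num, Real.rpow_natCast]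
    ring

lemma gauss_integral_sq (v : ℝ≥0) : ∫ x, (x : ℝ) ^ 2 ∂(gaussianReal 0 v) = v := by
  by_cases hv : v = 0
  · rw [hv, gaussianReal_zero_var, integral_dirac]; simp [hv]
  · have hvpos : (0:ℝ) < v := lt_of_le_of_ne v.coe_nonneg (by exact_mod_cast (Ne.symm hv))
    have hb : (0:ℝ) < (2 * (v:ℝ))⁻¹ := by positivity
    rw [gauss_int_eq v hv]
    have heq : (fun x : ℝ => gaussianPDFReal 0 v x * x ^ 2)
        = fun x : ℝ => (√(2 * π * v))⁻¹ * (x ^ 2 * rexp (-(2 * (v:ℝ))⁻¹ * x ^ 2)) := by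
      funext x; rw [pdf_eq]; ring
    rw [heq, integral_const_mul, integral_sq_exp hb]
    -- now pure arithmetic
    have h2v : (0:ℝ) < 2 * (v:ℝ) := by positivity
    have h1 : ((2 * (v:ℝ))⁻¹) ^ (-(3:ℝ)/2) = (2 * (v:ℝ)) ^ ((3:ℝ)/2) := by
      rw [Real.inv_rpow h2v.le, show (-(3:ℝ)/2) = -((3:ℝ)/2) by norm_num,
        Real.rpow_neg h2v.le, inv_inv]
    have h2 : (2 * (v:ℝ)) ^ ((3:ℝ)/2) = (2 * (v:ℝ)) * √(2 * (v:ℝ)) := by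
      rw [show ((3:ℝ)/2) = 1 + 1/2 by norm_num, Real.rpow_add h2v, Real.rpow_one,
        ← Real.sqrt_eq_rpow]
    have h3 : √(2 * π * (v:ℝ)) = √π * √(2 * (v:ℝ)) := by
      rw [show (2 * π * (v:ℝ)) = π * (2 * (v:ℝ)) by ring, Real.sqrt_mul Real.pi_pos.le]
    have hs : (0:ℝ) < √(2 * (v:ℝ)) := Real.sqrt_pos.2 h2v
    have hp : (0:ℝ) < √π := Real.sqrt_pos.2 Real.pi_pos
    rw [h1, h2, h3]
    field_simp

section Pi
variable {n : ℕ} {v : ℝ≥0}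

lemma pi_integrable_prod (f : Fin n → ℝ → ℝ)
    (hf : ∀ i, Integrable (f i) (gaussianReal 0 v)) :
    Integrable (fun x : Fin n → ℝ => ∏ i, f i (x i))
      (Measure.pi fun _ : Fin n => gaussianReal 0 v) := by
  letI : MeasureSpace ℝ := ⟨gaussianReal 0 v⟩
  haveI : SigmaFinite (volume : Measure ℝ) :=
    inferInstanceAs (SigmaFinite (gaussianReal 0 v))
  exact Integrable.fintype_prod (f := f) hf

lemma pi_integral_prod (f : Fin n → ℝ → ℝ) :
    ∫ x : Fin n → ℝ, ∏ i, f i (x i) ∂(Measure.pi fun _ : Fin n => gaussianReal 0 v)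
      = ∏ i, ∫ t, f i t ∂(gaussianReal 0 v) := by
  letI : MeasureSpace ℝ := ⟨gaussianReal 0 v⟩
  haveI : SigmaFinite (volume : Measure ℝ) :=
    inferInstanceAs (SigmaFinite (gaussianReal 0 v))
  exact integral_fintype_prod_eq_prod (ι := Fin n) (fun i => f i)

/-- one-coordinate function on a pi-gaussian -/
lemma pi_one (j : Fin n) (g : ℝ → ℝ) (hg : Integrable g (gaussianReal 0 v)) :
    Integrable (fun x : Fin n → ℝ => g (x j))
        (Measure.pi fun _ : Fin n => gaussianReal 0 v)
      ∧ ∫ x : Fin n → ℝ, g (x j) ∂(Measure.pi fun _ : Fin n => gaussianReal 0 v)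
        = ∫ t, g t ∂(gaussianReal 0 v) := by
  classical
  set f : Fin n → ℝ → ℝ := fun i t => if i = j then g t else 1 with hf
  have hprod : ∀ x : Fin n → ℝ, (∏ i, f i (x i)) = g (x j) := by
    intro x
    rw [← Finset.mul_prod_erase univ _ (mem_univ j)]
    have : ∏ i ∈ univ.erase j, f i (x i) = 1 :=
      Finset.prod_eq_one fun i hi => by
        simp [hf, (Finset.mem_erase.1 hi).1]
    simp [this, hf]
  have hint : ∀ i, Integrable (f i) (gaussianReal 0 v) := by
    intro i
    by_cases h : i = j
    · simpa [hf, h] using hg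
    · simpa [hf, h] using (integrable_const (1:ℝ))
  constructor
  · have := pi_integrable_prod f hint
    exact this.congr (ae_of_all _ fun x => hprod x)
  · rw [show (fun x : Fin n → ℝ => g (x j)) = fun x => ∏ i, f i (x i) from
      (funext fun x => (hprod x).symm), pi_integral_prod]
    rw [← Finset.mul_prod_erase univ _ (mem_univ j)]
    have h1 : ∏ i ∈ univ.erase j, ∫ t, f i t ∂(gaussianReal 0 v) = 1 :=
      Finset.prod_eq_one fun i hi => by simp [hf, (Finset.mem_erase.1 hi).1]
    rw [h1, mul_one]
    simp [hf]
  

/-- two-coordinate product on a pi-gaussian, distinct coordinates -/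
lemma pi_two {j k : Fin n} (hjk : j ≠ k) (g h : ℝ → ℝ)
    (hg : Integrable g (gaussianReal 0 v)) (hh : Integrable h (gaussianReal 0 v)) :
    Integrable (fun x : Fin n → ℝ => g (x j) * h (x k))
        (Measure.pi fun _ : Fin n => gaussianReal 0 v)
      ∧ ∫ x : Fin n → ℝ, g (x j) * h (x k) ∂(Measure.pi fun _ : Fin n => gaussianReal 0 v)
        = (∫ t, g t ∂(gaussianReal 0 v)) * ∫ t, h t ∂(gaussianReal 0 v) := by
  classical
  set f : Fin n → ℝ → ℝ := fun i t => if i = j then g t else if i = k then h t else 1 with hf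
  have hkj : k ≠ j := hjk.symm
  have hkmem : k ∈ univ.erase j := Finset.mem_erase.2 ⟨hkj, mem_univ k⟩
  have hprod : ∀ x : Fin n → ℝ, (∏ i, f i (x i)) = g (x j) * h (x k) := by
    intro x
    rw [← Finset.mul_prod_erase univ _ (mem_univ j),
      ← Finset.mul_prod_erase _ _ hkmem]
    have h1 : ∏ i ∈ (univ.erase j).erase k, f i (x i) = 1 :=
      Finset.prod_eq_one fun i hi => by
        have hik := (Finset.mem_erase.1 hi).1
        have hij := (Finset.mem_erase.1 (Finset.mem_erase.1 hi).2).1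
        simp [hf, hij, hik]
    rw [h1, mul_one]
    simp [hf, hkj]
  have hint : ∀ i, Integrable (f i) (gaussianReal 0 v) := by
    intro i
    by_cases h1 : i = j
    · simpa [hf, h1] using hg
    · by_cases h2 : i = k
      · simpa [hf, h1, h2, hkj] using hh
      · simpa [hf, h1, h2] using (integrable_const (1:ℝ))
  constructor
  · exact (pi_integrable_prod f hint).congr (ae_of_all _ fun x => hprod x)
  · rw [show (fun x : Fin n → ℝ => g (x j) * h (x k)) = fun x => ∏ i, f i (x i) from
      (funext fun x => (hprod x).symm), pi_integral_prod]
    rw [← Finset.mul_prod_erase univ _ (mem_univ j),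
      ← Finset.mul_prod_erase _ _ hkmem]
    have h1 : ∏ i ∈ (univ.erase j).erase k, ∫ t, f i t ∂(gaussianReal 0 v) = 1 :=
      Finset.prod_eq_one fun i hi => by
        have hik := (Finset.mem_erase.1 hi).1
        have hij := (Finset.mem_erase.1 (Finset.mem_erase.1 hi).2).1
        simp [hf, hij, hik]
    rw [h1, mul_one]
    simp [hf, hkj]

/-- covariance structure of coordinates -/
lemma pi_cov (j k : Fin n) :
    Integrable (fun x : Fin n → ℝ => x j * x k)
        (Measure.pi fun _ : Fin n => gaussianReal 0 v)
      ∧ ∫ x : Fin n → ℝ, x j * x k ∂(Measure.pi fun _ : Fin n => gaussianReal 0 v)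
        = if j = k then (v:ℝ) else 0 := by
  by_cases hjk : j = k
  · subst hjk
    have hsq : Integrable (fun t : ℝ => t * t) (gaussianReal 0 v) :=
      (gauss_integrable_sq v).congr (ae_of_all _ fun t => by ring)
    have H := pi_one j (fun t : ℝ => t * t) hsq
    refine ⟨H.1, ?_⟩
    rw [H.2, if_pos rfl]
    have : ∫ t, t * t ∂(gaussianReal 0 v) = ∫ t, t ^ 2 ∂(gaussianReal 0 v) :=
      integral_congr_ae (ae_of_all _ fun t => by ring)
    rw [this, gauss_integral_sq]
  · have H := pi_two hjk (fun t : ℝ => t) (fun t : ℝ => t)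
      (gauss_integrable_id v) (gauss_integrable_id v)
    refine ⟨H.1, ?_⟩
    rw [H.2, if_neg hjk, gauss_integral_id, zero_mul]

/-- single coordinate -/
lemma pi_coord (j : Fin n) :
    Integrable (fun x : Fin n → ℝ => x j)
        (Measure.pi fun _ : Fin n => gaussianReal 0 v)
      ∧ ∫ x : Fin n → ℝ, x j ∂(Measure.pi fun _ : Fin n => gaussianReal 0 v) = 0 := by
  have H := pi_one j (fun t : ℝ => t) (gauss_integrable_id v)
  exact ⟨H.1, by rw [H.2, gauss_integral_id]⟩

end Pi

section Pi
variable {n : ℕ} {v : ℝ≥0}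


lemma pi_lin (d : Fin n → ℝ) :
    Integrable (fun x : Fin n → ℝ => ∑ j, d j * x j)
        (Measure.pi fun _ : Fin n => gaussianReal 0 v)
      ∧ ∫ x : Fin n → ℝ, ∑ j, d j * x j ∂(Measure.pi fun _ : Fin n => gaussianReal 0 v)
        = 0 := by
  have hint : ∀ j : Fin n, Integrable (fun x : Fin n → ℝ => d j * x j)
      (Measure.pi fun _ : Fin n => gaussianReal 0 v) :=
    fun j => (pi_coord j).1.const_mul (d j)
  constructor
  · exact integrable_finset_sum univ fun j _ => hint j
  · rw [integral_finset_sum univ fun j _ => hint j]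
    refine Finset.sum_eq_zero fun j _ => ?_
    rw [integral_const_mul, (pi_coord j).2, mul_zero]

lemma pi_lin_sq (d : Fin n → ℝ) :
    Integrable (fun x : Fin n → ℝ => (∑ j, d j * x j) ^ 2)
        (Measure.pi fun _ : Fin n => gaussianReal 0 v)
      ∧ ∫ x : Fin n → ℝ, (∑ j, d j * x j) ^ 2 ∂(Measure.pi fun _ : Fin n => gaussianReal 0 v)
        = (v:ℝ) * ∑ j, d j ^ 2 := by
  have hexp : ∀ x : Fin n → ℝ,
      (∑ j, d j * x j) ^ 2 = ∑ j, ∑ k, (d j * d k) * (x j * x k) := by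
    intro x
    rw [sq, Finset.sum_mul_sum]
    refine Finset.sum_congr rfl fun j _ => Finset.sum_congr rfl fun k _ => by ring
  have hint : ∀ j k : Fin n, Integrable (fun x : Fin n → ℝ => (d j * d k) * (x j * x k))
      (Measure.pi fun _ : Fin n => gaussianReal 0 v) :=
    fun j k => (pi_cov j k).1.const_mul _
  have hint2 : ∀ j : Fin n, Integrable (fun x : Fin n → ℝ => ∑ k, (d j * d k) * (x j * x k))
      (Measure.pi fun _ : Fin n => gaussianReal 0 v) :=
    fun j => integrable_finset_sum univ fun k _ => hint j k
  constructor
  · exact (integrable_finset_sum univ fun j _ => hint2 j).congr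
      (ae_of_all _ fun x => (hexp x).symm)
  · rw [show (fun x : Fin n → ℝ => (∑ j, d j * x j) ^ 2)
        = fun x => ∑ j, ∑ k, (d j * d k) * (x j * x k) from funext hexp]
    rw [integral_finset_sum univ fun j _ => hint2 j]
    have : ∀ j : Fin n,
        ∫ x : Fin n → ℝ, ∑ k, (d j * d k) * (x j * x k)
            ∂(Measure.pi fun _ : Fin n => gaussianReal 0 v)
          = d j ^ 2 * (v:ℝ) := by
      intro j
      rw [integral_finset_sum univ fun k _ => hint j k]
      have hterm : ∀ k : Fin n,
          ∫ x : Fin n → ℝ, (d j * d k) * (x j * x k)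
              ∂(Measure.pi fun _ : Fin n => gaussianReal 0 v)
            = if j = k then d j * d k * (v:ℝ) else 0 := by
        intro k
        rw [integral_const_mul, (pi_cov j k).2]
        by_cases h : j = k <;> simp [h]
      rw [Finset.sum_congr rfl fun k _ => hterm k, Finset.sum_ite_eq univ j
        (fun k => d j * d k * (v:ℝ)), if_pos (mem_univ j)]
      ring
    rw [Finset.sum_congr rfl fun j _ => this j, ← Finset.sum_mul]
    ring

/-- affine functional : F x = c - ∑ j, d j * x j -/
lemma pi_affine (c : ℝ) (d : Fin n → ℝ) :
    (Integrable (fun x : Fin n → ℝ => c - ∑ j, d j * x j)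
        (Measure.pi fun _ : Fin n => gaussianReal 0 v)
      ∧ ∫ x : Fin n → ℝ, (c - ∑ j, d j * x j)
          ∂(Measure.pi fun _ : Fin n => gaussianReal 0 v) = c)
    ∧ (Integrable (fun x : Fin n → ℝ => (c - ∑ j, d j * x j) ^ 2)
        (Measure.pi fun _ : Fin n => gaussianReal 0 v)
      ∧ ∫ x : Fin n → ℝ, (c - ∑ j, d j * x j) ^ 2
          ∂(Measure.pi fun _ : Fin n => gaussianReal 0 v)
        = c ^ 2 + (v:ℝ) * ∑ j, d j ^ 2) := by
  have hS := pi_lin (v := v) d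
  have hS2 := pi_lin_sq (v := v) d
  have hF : Integrable (fun x : Fin n → ℝ => c - ∑ j, d j * x j)
      (Measure.pi fun _ : Fin n => gaussianReal 0 v) := (integrable_const c).sub hS.1
  refine ⟨⟨hF, ?_⟩, ?_⟩
  · rw [integral_sub (integrable_const c) hS.1, hS.2, integral_const]
    simp
  · have hexp : (fun x : Fin n → ℝ => (c - ∑ j, d j * x j) ^ 2)
        = fun x => (c ^ 2 + (-2 * c) * ∑ j, d j * x j) + (∑ j, d j * x j) ^ 2 := by
      funext x; ring
    have hI1 : Integrable (fun x : Fin n → ℝ => c ^ 2 + (-2 * c) * ∑ j, d j * x j)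
        (Measure.pi fun _ : Fin n => gaussianReal 0 v) :=
      (integrable_const _).add (hS.1.const_mul _)
    constructor
    · rw [hexp]; exact hI1.add hS2.1
    · rw [hexp, integral_add hI1 hS2.1, integral_add (integrable_const _) (hS.1.const_mul _),
        integral_const, integral_const_mul, hS.2, hS2.2]
      simp
end Pi

lemma prod_sq {α β : Type*} [MeasurableSpace α] [MeasurableSpace β]
    (μ1 : Measure α) (μ2 : Measure β)
    [IsProbabilityMeasure μ1] [IsProbabilityMeasure μ2]
    (F : α → ℝ) (G : β → ℝ)
    (hF1 : Integrable F μ1) (hF2 : Integrable (fun x => F x ^ 2) μ1)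
    (hG1 : Integrable G μ2) (hG2 : Integrable (fun y => G y ^ 2) μ2) :
    Integrable (fun p : α × β => (F p.1 - G p.2) ^ 2) (μ1.prod μ2)
      ∧ ∫ p : α × β, (F p.1 - G p.2) ^ 2 ∂(μ1.prod μ2)
        = (∫ x, F x ^ 2 ∂μ1) - 2 * (∫ x, F x ∂μ1) * (∫ y, G y ∂μ2)
          + ∫ y, G y ^ 2 ∂μ2 := by
  have hexp : (fun p : α × β => (F p.1 - G p.2) ^ 2)
      = fun p : α × β => ((fun x => F x ^ 2) p.1 * (fun _ : β => (1:ℝ)) p.2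
          + (fun x => -2 * F x) p.1 * G p.2)
        + (fun _ : α => (1:ℝ)) p.1 * (fun y => G y ^ 2) p.2 := by
    funext p; simp only; ring
  have hI1 : Integrable (fun p : α × β => (fun x => F x ^ 2) p.1 * (fun _ : β => (1:ℝ)) p.2)
      (μ1.prod μ2) := hF2.mul_prod (integrable_const 1)
  have hI2 : Integrable (fun p : α × β => (fun x => -2 * F x) p.1 * G p.2) (μ1.prod μ2) :=
    (hF1.const_mul _).mul_prod hG1
  have hI3 : Integrable (fun p : α × β => (fun _ : α => (1:ℝ)) p.1 * (fun y => G y ^ 2) p.2)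
      (μ1.prod μ2) := (integrable_const 1).mul_prod hG2
  have hI12 : Integrable (fun p : α × β =>
      (fun x => F x ^ 2) p.1 * (fun _ : β => (1:ℝ)) p.2
        + (fun x => -2 * F x) p.1 * G p.2) (μ1.prod μ2) := hI1.add hI2
  constructor
  · rw [hexp]; exact hI12.add hI3
  · rw [hexp, integral_add hI12 hI3, integral_add hI1 hI2,
      integral_prod_mul (fun x => F x ^ 2) (fun _ : β => (1:ℝ)),
      integral_prod_mul (fun x => -2 * F x) G,
      integral_prod_mul (fun _ : α => (1:ℝ)) (fun y => G y ^ 2)]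
    rw [integral_const, integral_const, integral_const_mul]
    simp only [measure_univ, probReal_univ, ENNReal.toReal_one, smul_eq_mul, one_mul, mul_one]
    ring

end FusedMSE

open FusedMSE in

/-- **MSE of the fused estimate (the quantity `I₂`).**
If `y = A x_0 + n` with `n ~ N(0, σ_y² I_M)` and `x̃ = x_0 + σ̃ ε` with `ε ~ N(0, I_N)`
independent of `n`, then for any `w ∈ ℝ`:
`E‖x_0 − (w Aᵀy + (1−w) x̃)‖² = w² (‖(I−AᵀA)x_0‖² + σ_y² ‖A‖_F²) + (1−w)² σ̃² N`. -/
theorem fused_estimate_mse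
    (M N : ℕ) (hM : 1 ≤ M) (hN : 1 ≤ N)
    (A : Matrix (Fin M) (Fin N) ℝ) (x0 : Fin N → ℝ)
    (σy : ℝ) (hσy : 0 ≤ σy) (σt : ℝ) (hσt : 0 ≤ σt) (w : ℝ) :
    (∫ p : (Fin M → ℝ) × (Fin N → ℝ),
        ∑ i, (x0 i - (w • A.transpose.mulVec (A.mulVec x0 + p.1)
            + (1 - w) • (x0 + σt • p.2)) i) ^ 2
        ∂((Measure.pi fun _ : Fin M => gaussianReal 0 ⟨σy ^ 2, sq_nonneg _⟩).prod
            (Measure.pi fun _ : Fin N => gaussianReal 0 1)))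
      = w ^ 2 * ((∑ i, (x0 i - A.transpose.mulVec (A.mulVec x0) i) ^ 2)
            + σy ^ 2 * ∑ i, ∑ j, (A i j) ^ 2)
        + (1 - w) ^ 2 * σt ^ 2 * N := by
  set V : NNReal := ⟨σy ^ 2, sq_nonneg _⟩ with hV
  set μ1 : Measure (Fin M → ℝ) := Measure.pi fun _ => gaussianReal 0 V with hμ1
  set μ2 : Measure (Fin N → ℝ) := Measure.pi fun _ => gaussianReal 0 1 with hμ2
  set c : Fin N → ℝ := fun i => w * (x0 i - A.transpose.mulVec (A.mulVec x0) i) with hc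
  set d : Fin N → Fin M → ℝ := fun i j => w * A j i with hd
  set β : ℝ := (1 - w) * σt with hβ
  set F : Fin N → (Fin M → ℝ) → ℝ := fun i x => c i - ∑ j, d i j * x j with hF
  set G : Fin N → (Fin N → ℝ) → ℝ := fun i y => β * y i with hG
  -- pointwise identification of the integrand
  have hmv : ∀ (i : Fin N) (u : Fin M → ℝ),
      A.transpose.mulVec (A.mulVec x0 + u) i
        = A.transpose.mulVec (A.mulVec x0) i + ∑ j, A j i * u j := by
    intro i u
    simp [Matrix.mulVec, dotProduct, Matrix.transpose_apply, mul_add,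
      Finset.sum_add_distrib]
  have hpt : ∀ (p : (Fin M → ℝ) × (Fin N → ℝ)) (i : Fin N),
      x0 i - (w • A.transpose.mulVec (A.mulVec x0 + p.1)
          + (1 - w) • (x0 + σt • p.2)) i = F i p.1 - G i p.2 := by
    intro p i
    have hws : (∑ j, d i j * p.1 j) = w * ∑ j, A j i * p.1 j := by
      rw [Finset.mul_sum]
      exact Finset.sum_congr rfl fun j _ => by rw [hd]; ring
    simp only [Pi.add_apply, Pi.smul_apply, smul_eq_mul, hmv i p.1, hF, hG, hws]
    ring
  -- per-coordinate integrability and integral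
  have hFint := fun i : Fin N => pi_affine (v := V) (c i) (d i)
  have hGint1 : ∀ i : Fin N, Integrable (G i) μ2 := fun i =>
    (pi_coord (v := 1) i).1.const_mul β
  have hGval1 : ∀ i : Fin N, ∫ y, G i y ∂μ2 = 0 := fun i => by
    rw [hG]; simp only
    rw [integral_const_mul, (pi_coord (v := 1) i).2, mul_zero]
  have hGint2 : ∀ i : Fin N, Integrable (fun y => G i y ^ 2) μ2 := fun i => by
    refine ((pi_cov (v := 1) i i).1.const_mul (β ^ 2)).congr (ae_of_all _ fun y => ?_)
    rw [hG]; ring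
  have hGval2 : ∀ i : Fin N, ∫ y, G i y ^ 2 ∂μ2 = β ^ 2 := fun i => by
    have : (fun y : Fin N → ℝ => G i y ^ 2) = fun y => β ^ 2 * (y i * y i) := by
      funext y; rw [hG]; ring
    rw [this, integral_const_mul, (pi_cov (v := 1) i i).2, if_pos rfl]
    simp
  have hps := fun i : Fin N => prod_sq μ1 μ2 (F i) (G i)
    (hFint i).1.1 (hFint i).2.1 (hGint1 i) (hGint2 i)
  -- main computation
  calc
    (∫ p : (Fin M → ℝ) × (Fin N → ℝ),
        ∑ i, (x0 i - (w • A.transpose.mulVec (A.mulVec x0 + p.1)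
            + (1 - w) • (x0 + σt • p.2)) i) ^ 2 ∂(μ1.prod μ2))
        = ∫ p : (Fin M → ℝ) × (Fin N → ℝ), ∑ i, (F i p.1 - G i p.2) ^ 2 ∂(μ1.prod μ2) := by
          refine integral_congr_ae (ae_of_all _ fun p => ?_)
          exact Finset.sum_congr rfl fun i _ => by rw [hpt p i]
    _ = ∑ i, ∫ p : (Fin M → ℝ) × (Fin N → ℝ), (F i p.1 - G i p.2) ^ 2 ∂(μ1.prod μ2) :=
          integral_finset_sum univ fun i _ => (hps i).1
    _ = ∑ i, ((c i ^ 2 + (V:ℝ) * ∑ j, d i j ^ 2) - 2 * c i * 0 + β ^ 2) := by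
          refine Finset.sum_congr rfl fun i _ => ?_
          rw [(hps i).2, (hFint i).2.2, (hFint i).1.2, hGval1 i, hGval2 i]
    _ = w ^ 2 * ((∑ i, (x0 i - A.transpose.mulVec (A.mulVec x0) i) ^ 2)
            + σy ^ 2 * ∑ i, ∑ j, (A i j) ^ 2)
        + (1 - w) ^ 2 * σt ^ 2 * N := by
          have hVc : (V:ℝ) = σy ^ 2 := rfl
          simp only [mul_zero, sub_zero, hVc]
          rw [Finset.sum_add_distrib, Finset.sum_add_distrib]
          rw [Finset.sum_const, Finset.card_univ, Fintype.card_fin, nsmul_eq_mul]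
          have h1 : ∑ i, c i ^ 2
              = w ^ 2 * ∑ i, (x0 i - A.transpose.mulVec (A.mulVec x0) i) ^ 2 := by
            rw [Finset.mul_sum]
            exact Finset.sum_congr rfl fun i _ => by rw [hc]; ring
          have h2 : ∑ i : Fin N, σy ^ 2 * ∑ j : Fin M, d i j ^ 2
              = w ^ 2 * (σy ^ 2 * ∑ i : Fin M, ∑ j : Fin N, A i j ^ 2) := by
            rw [show (∑ i : Fin M, ∑ j : Fin N, A i j ^ 2)
                = ∑ j : Fin N, ∑ i : Fin M, A i j ^ 2 from Finset.sum_comm]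
            rw [Finset.mul_sum, Finset.mul_sum]
            refine Finset.sum_congr rfl fun i _ => ?_
            rw [Finset.mul_sum, Finset.mul_sum, Finset.mul_sum]
            refine Finset.sum_congr rfl fun j _ => ?_
            rw [hd]; ring
          rw [h1, h2, hβ]
          ring
end
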